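/- arXiv:2512.21096 — 4 statements merged into one kernel-verified Lean document; each statement's English description precedes it below -/
import Mathlib

section
/- The finite hyperbolic Chebyshev constant of the closed disk of radius ρ < 1 centered at the origin equals ρ for every number of points q ≥ 1; in particular the hyperbolic Chebyshev constant τ(D̄_ρ) = ρ. -/
noncomputable def pseudoHyp (z μ : ℂ) : ℝ := ‖(z - μ) / (1 - (starRingEnd ℂ) μ * z)‖

/-- The finite hyperbolic Chebyshev constant of a closed set `D ⊆ 𝔻`:
`τ_q(D) = min_{μ ∈ D^q} max_{z ∈ D} (∏_k [z, μ_k]_h)^{1/q}`. -/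
noncomputable def finChebyshev (D : Set ℂ) (q : ℕ) : ℝ :=
  sInf { M : ℝ | ∃ μ : Fin q → ℂ, (∀ k, μ k ∈ D) ∧
    M = sSup { s : ℝ | ∃ z ∈ D, s = (∏ k, pseudoHyp z (μ k)) ^ ((1 : ℝ) / q) } }

open Metric Finset

lemma pseudoHyp_nonneg (z μ : ℂ) : 0 ≤ pseudoHyp z μ := norm_nonneg _

lemma rpow_pow_inv {x : ℝ} (hx : 0 ≤ x) {q : ℕ} (hq : q ≠ 0) :
    (x ^ q) ^ ((1 : ℝ) / q) = x := by
  rw [← Real.rpow_natCast x q, ← Real.rpow_mul hx, mul_one_div,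
    div_self (by exact_mod_cast hq), Real.rpow_one]

lemma denom_lb {ρ : ℝ} (hρ1 : ρ < 1) {z μ : ℂ} (hz : ‖z‖ ≤ ρ)
    (hμ : ‖μ‖ ≤ ρ) : 1 - ρ ^ 2 ≤ ‖1 - (starRingEnd ℂ) μ * z‖ := by
  have h1 : ‖(starRingEnd ℂ) μ * z‖ ≤ ρ ^ 2 := by
    rw [norm_mul, Complex.norm_conj, sq]
    exact mul_le_mul hμ hz (norm_nonneg z) (le_trans (norm_nonneg μ) hμ)
  calc 1 - ρ ^ 2 ≤ 1 - ‖(starRingEnd ℂ) μ * z‖ := by linarith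
    _ = ‖(1 : ℂ)‖ - ‖(starRingEnd ℂ) μ * z‖ := by simp
    _ ≤ ‖1 - (starRingEnd ℂ) μ * z‖ := by
        exact le_trans (le_abs_self _) (abs_norm_sub_norm_le _ _)

lemma pseudoHyp_ub {ρ : ℝ} (hρ1 : ρ < 1) {z μ : ℂ} (hz : ‖z‖ ≤ ρ)
    (hμ : ‖μ‖ ≤ ρ) : pseudoHyp z μ ≤ 2 / (1 - ρ ^ 2) := by
  have hρ2 : (0 : ℝ) < 1 - ρ ^ 2 := by nlinarith [norm_nonneg z, le_trans (norm_nonneg z) hz]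
  rw [pseudoHyp, norm_div]
  have hnum : ‖z - μ‖ ≤ 2 := by
    calc ‖z - μ‖ ≤ ‖z‖ + ‖μ‖ := by
          simpa [sub_eq_add_neg] using norm_add_le z (-μ)
      _ ≤ ρ + ρ := add_le_add hz hμ
      _ ≤ 2 := by linarith
  exact div_le_div₀ (by norm_num) hnum hρ2 (denom_lb hρ1 hz hμ)

/-- The key lower bound, via the maximum modulus principle applied to
`f z = ∏ (ρ² - μ̄ₖ z)/(1 - μ̄ₖ z)`. -/
lemma exists_big_point {ρ : ℝ} (hρ0 : 0 < ρ) (hρ1 : ρ < 1) {q : ℕ}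
    (μ : Fin q → ℂ) (hμ : ∀ k, ‖μ k‖ ≤ ρ) :
    ∃ z : ℂ, ‖z‖ ≤ ρ ∧ ρ ^ q ≤ ∏ k, pseudoHyp z (μ k) := by
  set g : Fin q → ℂ → ℂ := fun k z => ((ρ : ℂ) ^ 2 - (starRingEnd ℂ) (μ k) * z) /
      (1 - (starRingEnd ℂ) (μ k) * z) with hg
  set f : ℂ → ℂ := fun z => ∏ k, g k z with hf
  have hden : ∀ (k : Fin q) (z : ℂ), ‖z‖ ≤ ρ → 1 - (starRingEnd ℂ) (μ k) * z ≠ 0 := by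
    intro k z hz h0
    have := denom_lb hρ1 hz (hμ k)
    rw [h0] at this
    simp only [norm_zero] at this
    nlinarith
  -- differentiability on the closed ball
  have hdiff : ∀ t : Finset (Fin q),
      DifferentiableOn ℂ (fun z => ∏ k ∈ t, g k z) (closedBall (0 : ℂ) ρ) := by
    intro t
    induction t using Finset.induction_on with
    | empty => simpa using differentiableOn_const (1 : ℂ)
    | insert a s hk ih =>
      simp only [Finset.prod_insert hk]
      refine DifferentiableOn.mul ?_ ih
      refine DifferentiableOn.div ?_ ?_ ?_
      · exact (differentiableOn_const _).sub
          ((differentiableOn_const _).mul differentiableOn_id)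
      · exact (differentiableOn_const _).sub
          ((differentiableOn_const _).mul differentiableOn_id)
      · intro z hz
        exact hden a z (by simpa using mem_closedBall_zero_iff.mp hz)
  have hfdiff : DifferentiableOn ℂ f (closedBall (0 : ℂ) ρ) := hdiff Finset.univ
  have hcl : closure (ball (0 : ℂ) ρ) = closedBall (0 : ℂ) ρ := closure_ball 0 hρ0.ne'
  have hdc : DiffContOnCl ℂ f (ball (0 : ℂ) ρ) := by
    refine DifferentiableOn.diffContOnCl ?_
    rwa [hcl]
  obtain ⟨z₀, hz₀f, hmax⟩ := Complex.exists_mem_frontier_isMaxOn_norm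
    isBounded_ball ⟨0, mem_ball_self hρ0⟩ hdc
  rw [frontier_ball (0 : ℂ) hρ0.ne'] at hz₀f
  have hz₀ : ‖z₀‖ = ρ := by simpa using mem_sphere_zero_iff_norm.mp hz₀f
  have h0mem : (0 : ℂ) ∈ closure (ball (0 : ℂ) ρ) := by
    rw [hcl]; exact mem_closedBall_self hρ0.le
  have hle : ‖f 0‖ ≤ ‖f z₀‖ := hmax h0mem
  -- compute ‖f 0‖
  have hf0 : ‖f 0‖ = ρ ^ (2 * q) := by
    have : f 0 = ((ρ : ℂ) ^ 2) ^ q := by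
      simp [hf, hg, Finset.prod_const]
    rw [this]
    rw [norm_pow, norm_pow, Complex.norm_real, Real.norm_eq_abs, abs_of_pos hρ0, ← pow_mul]
  -- compute ‖f z₀‖ on the sphere
  have hkey : ∀ k : Fin q, (ρ : ℂ) ^ 2 - (starRingEnd ℂ) (μ k) * z₀
      = z₀ * (starRingEnd ℂ) (z₀ - μ k) := by
    intro k
    have hns : z₀ * (starRingEnd ℂ) z₀ = ((ρ : ℂ)) ^ 2 := by
      rw [Complex.mul_conj, Complex.normSq_eq_norm_sq, hz₀]
      push_cast
      ring
    rw [map_sub, mul_sub, hns]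
    ring
  have hfz : ‖f z₀‖ = ρ ^ q * ∏ k, pseudoHyp z₀ (μ k) := by
    rw [hf]
    simp only
    rw [norm_prod]
    calc ∏ k, ‖g k z₀‖ = ∏ k, ρ * pseudoHyp z₀ (μ k) := by
          refine Finset.prod_congr rfl fun k _ => ?_
          rw [hg]
          simp only
          rw [hkey k, pseudoHyp, norm_div, norm_div, norm_mul, Complex.norm_conj, hz₀,
            mul_div_assoc]
      _ = ρ ^ q * ∏ k, pseudoHyp z₀ (μ k) := by
          rw [Finset.prod_mul_distrib, Finset.prod_const, Finset.card_univ, Fintype.card_fin]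
  rw [hf0, hfz, two_mul, pow_add] at hle
  have hρq : (0 : ℝ) < ρ ^ q := pow_pos hρ0 q
  exact ⟨z₀, hz₀.le, le_of_mul_le_mul_left (by linarith [hle]) hρq⟩

theorem finChebyshev_closedBall (ρ : ℝ) (hρ0 : 0 < ρ) (hρ1 : ρ < 1) (q : ℕ) (hq : 1 ≤ q) :
    finChebyshev {z : ℂ | ‖z‖ ≤ ρ} q = ρ := by
  have hqne : q ≠ 0 := Nat.one_le_iff_ne_zero.mp hq
  set D : Set ℂ := {z : ℂ | ‖z‖ ≤ ρ} with hD
  set T : (Fin q → ℂ) → Set ℝ := fun μ =>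
    { s : ℝ | ∃ z ∈ D, s = (∏ k, pseudoHyp z (μ k)) ^ ((1 : ℝ) / q) } with hT
  set S : Set ℝ := { M : ℝ | ∃ μ : Fin q → ℂ, (∀ k, μ k ∈ D) ∧ M = sSup (T μ) } with hS
  have hTbdd : ∀ μ : Fin q → ℂ, (∀ k, μ k ∈ D) → BddAbove (T μ) := by
    intro μ hμ
    refine ⟨2 / (1 - ρ ^ 2), fun s hs => ?_⟩
    obtain ⟨z, hz, rfl⟩ := hs
    have hzρ : ‖z‖ ≤ ρ := hz
    have hC : (0 : ℝ) ≤ 2 / (1 - ρ ^ 2) := by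
      have : (0 : ℝ) < 1 - ρ ^ 2 := by nlinarith
      positivity
    calc (∏ k, pseudoHyp z (μ k)) ^ ((1 : ℝ) / q)
        ≤ ((2 / (1 - ρ ^ 2)) ^ q) ^ ((1 : ℝ) / q) := by
          refine Real.rpow_le_rpow (Finset.prod_nonneg fun k _ => pseudoHyp_nonneg _ _) ?_
            (by positivity)
          calc ∏ k, pseudoHyp z (μ k) ≤ ∏ _k : Fin q, (2 / (1 - ρ ^ 2)) :=
                Finset.prod_le_prod (fun k _ => pseudoHyp_nonneg _ _)
                  (fun k _ => pseudoHyp_ub hρ1 hzρ (hμ k))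
            _ = (2 / (1 - ρ ^ 2)) ^ q := by simp [Finset.prod_const, div_pow]
      _ = 2 / (1 - ρ ^ 2) := rpow_pow_inv hC hqne
  -- ρ ∈ S
  have hρupper : ∀ s ∈ T (fun _ => 0), s ≤ ρ := by
    intro s hs
    obtain ⟨z, hz, rfl⟩ := hs
    have h1 : ∀ k : Fin q, pseudoHyp z ((fun _ => (0:ℂ)) k) = ‖z‖ := by
      intro k; simp [pseudoHyp]
    rw [Finset.prod_congr rfl (fun k _ => h1 k), Finset.prod_const, Finset.card_univ,
      Fintype.card_fin, rpow_pow_inv (norm_nonneg z) hqne]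
    exact hz
  have hρT : ρ ∈ T (fun _ => 0) := by
    refine ⟨(ρ : ℂ), ?_, ?_⟩
    · simp [hD, abs_of_pos hρ0]
    · have h1 : ∀ k : Fin q, pseudoHyp (ρ : ℂ) ((fun _ => (0:ℂ)) k) = ρ := by
        intro k; simp [pseudoHyp, abs_of_pos hρ0]
      rw [Finset.prod_congr rfl (fun k _ => h1 k), Finset.prod_const, Finset.card_univ,
        Fintype.card_fin, rpow_pow_inv hρ0.le hqne]
  have hρS : ρ ∈ S := by
    refine ⟨fun _ => 0, fun k => by simp [hD, hρ0.le], ?_⟩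
    exact le_antisymm (le_csSup (hTbdd _ (fun k => by simp [hD, hρ0.le])) hρT)
      (csSup_le ⟨ρ, hρT⟩ hρupper)
  -- every element of S is ≥ ρ
  have hlow : ∀ M ∈ S, ρ ≤ M := by
    intro M hM
    obtain ⟨μ, hμ, rfl⟩ := hM
    obtain ⟨z, hz, hbig⟩ := exists_big_point hρ0 hρ1 μ (fun k => hμ k)
    have hmem : (∏ k, pseudoHyp z (μ k)) ^ ((1 : ℝ) / q) ∈ T μ := ⟨z, hz, rfl⟩
    have : ρ ≤ (∏ k, pseudoHyp z (μ k)) ^ ((1 : ℝ) / q) := by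
      calc ρ = (ρ ^ q) ^ ((1 : ℝ) / q) := (rpow_pow_inv hρ0.le hqne).symm
        _ ≤ (∏ k, pseudoHyp z (μ k)) ^ ((1 : ℝ) / q) :=
          Real.rpow_le_rpow (pow_nonneg hρ0.le q) hbig (by positivity)
    exact le_trans this (le_csSup (hTbdd μ hμ) hmem)
  have : finChebyshev D q = sInf S := rfl
  rw [this]
  exact le_antisymm (csInf_le ⟨ρ, hlow⟩ hρS) (le_csInf ⟨ρ, hρS⟩ hlow)
end

section
/- Let λ ∈ 𝔻 and μ_1,...,μ_q ∈ 𝔻 be pairwise distinct and distinct from λ. Then the minimal squared H² approximation error of 1/(z-λ) by linear combinations of 1/(z-μ_k) satisfies: min over complex r_1,...,r_q of ‖1/(z-λ) - Σ_k r_k/(z-μ_k)‖₂² = (1/(1-|λ|²)) · ∏_{k=1}^q [λ,μ_k]_h², where the H² norm is the L² norm of coefficients of the power series in z^{-1} (equivalently, the L² norm over the unit circle). -/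
/-- The squared H² error `‖1/(z-λ) - Σ_k r_k/(z-μ_k)‖₂²`, computed as the ℓ² norm of
the coefficients of the expansion in powers of `z⁻¹`: coefficient `n` is `λⁿ - Σ_k r_k μ_kⁿ`. -/
noncomputable def h2SqError (q : ℕ) (lam : ℂ) (μ : Fin q → ℂ) (r : Fin q → ℂ) : ℝ :=
  ∑' n : ℕ, ‖lam ^ n - ∑ k, r k * μ k ^ n‖ ^ 2

namespace H2B

open Finset Polynomial

local notation "conj'" => starRingEnd ℂ

lemma one_sub_ne {a b : ℂ} (ha : ‖a‖ < 1) (hb : ‖b‖ < 1) :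
    (1 : ℂ) - a * b ≠ 0 := by
  intro h
  have h1 : a * b = 1 := by linear_combination -h
  have h2 : ‖a * b‖ = 1 := by rw [h1, norm_one]
  rw [norm_mul] at h2
  nlinarith [norm_nonneg a, norm_nonneg b]

lemma hasSum_aux {a v : ℂ} (ha : ‖a‖ < 1) (hv : ‖v‖ < 1) :
    HasSum (fun n : ℕ => a ^ n * v ^ n) ((1 - a * v)⁻¹) := by
  have h : ‖a * v‖ < 1 := by
    rw [norm_mul]
    nlinarith [norm_nonneg a, norm_nonneg v]
  simpa [mul_pow] using hasSum_geometric_of_norm_lt_one h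

section Main

variable {q : ℕ} (lam : ℂ) (μ : Fin q → ℂ)

/-- the Blaschke product value -/
noncomputable def bl : ℂ := ∏ k, (lam - μ k) * (1 - lam * conj' (μ k))⁻¹

/-- the optimal coefficients -/
noncomputable def rOpt (k : Fin q) : ℂ :=
  bl lam μ * (∏ j, (1 - μ k * conj' (μ j))) *
    ((lam - μ k) * ∏ j ∈ univ.erase k, (μ k - μ j))⁻¹

/-- The key polynomial which we show vanishes identically. -/
noncomputable def P : Polynomial ℂ :=
  (∏ j, (1 - C (μ j) * X))
  - (∑ k, C (rOpt lam μ k) * ((1 - C lam * X) * ∏ j ∈ univ.erase k, (1 - C (μ j) * X)))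
  - C (bl lam μ) * ∏ j, (X - C (conj' (μ j)))

lemma natDegree_P_le : (P lam μ).natDegree ≤ q := by
  have hlin : ∀ a : ℂ, (1 - C a * X : Polynomial ℂ).natDegree ≤ 1 := by
    intro a
    refine le_trans (natDegree_sub_le _ _) ?_
    simpa using le_trans (natDegree_C_mul_le _ _) (by simp)
  have h1 : (∏ j, (1 - C (μ j) * X) : Polynomial ℂ).natDegree ≤ q := by
    refine le_trans (natDegree_prod_le _ _) ?_
    calc ∑ j, (1 - C (μ j) * X : Polynomial ℂ).natDegree ≤ ∑ _j : Fin q, 1 :=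
      Finset.sum_le_sum (fun j _ => hlin (μ j))
    _ = q := by simp
  have h2 : ∀ k : Fin q, ((1 - C lam * X) *
      ∏ j ∈ univ.erase k, (1 - C (μ j) * X) : Polynomial ℂ).natDegree ≤ q := by
    intro k
    refine le_trans (natDegree_mul_le) ?_
    have h3 : (∏ j ∈ univ.erase k, (1 - C (μ j) * X) : Polynomial ℂ).natDegree ≤ q - 1 := by
      refine le_trans (natDegree_prod_le _ _) ?_
      calc ∑ j ∈ univ.erase k, (1 - C (μ j) * X : Polynomial ℂ).natDegree
          ≤ ∑ _j ∈ univ.erase k, 1 := Finset.sum_le_sum (fun j _ => hlin (μ j))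
        _ = q - 1 := by simp [Finset.card_erase_of_mem]
    have hq : 1 ≤ q := k.pos
    have := hlin lam
    omega
  refine le_trans (natDegree_sub_le _ _)
    (max_le (le_trans (natDegree_sub_le _ _) (max_le h1 ?_)) ?_)
  · refine le_trans (natDegree_sum_le _ _) ?_
    rw [Finset.fold_max_le]
    refine ⟨by omega, fun k _ => le_trans (natDegree_C_mul_le _ _) (h2 k)⟩
  · refine le_trans (natDegree_C_mul_le _ _) ?_
    refine le_trans (natDegree_prod_le _ _) ?_
    calc ∑ j, (X - C (conj' (μ j)) : Polynomial ℂ).natDegree ≤ ∑ _j : Fin q, 1 :=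
      Finset.sum_le_sum (fun j _ => natDegree_X_sub_C_le _)
    _ = q := by simp

lemma eval_P_mu (k : Fin q) (hk : μ k ≠ 0) (hdist : Function.Injective μ)
    (hne : ∀ k, μ k ≠ lam) : (P lam μ).eval ((μ k)⁻¹) = 0 := by
  have hq1 : 1 ≤ q := k.pos
  simp only [P, eval_sub, eval_prod, eval_finset_sum, eval_mul, eval_one, eval_C, eval_X]
  have e1 : (∏ j, (1 - μ j * (μ k)⁻¹)) = 0 :=
    Finset.prod_eq_zero (mem_univ k) (by field_simp; ring)
  have e2 : (∑ k', rOpt lam μ k' *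
        ((1 - lam * (μ k)⁻¹) * ∏ j ∈ univ.erase k', (1 - μ j * (μ k)⁻¹)))
      = rOpt lam μ k * ((1 - lam * (μ k)⁻¹) * ∏ j ∈ univ.erase k, (1 - μ j * (μ k)⁻¹)) := by
    refine Finset.sum_eq_single k (fun k' _ hk' => ?_) (fun h => absurd (mem_univ k) h)
    rw [Finset.prod_eq_zero (Finset.mem_erase.mpr ⟨Ne.symm hk', mem_univ k⟩) (by field_simp; ring),
      mul_zero, mul_zero]
  have hp1 : (∏ j ∈ univ.erase k, (1 - μ j * (μ k)⁻¹))
      = ((μ k)⁻¹) ^ (q - 1) * ∏ j ∈ univ.erase k, (μ k - μ j) := by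
    calc (∏ j ∈ univ.erase k, (1 - μ j * (μ k)⁻¹))
        = ∏ j ∈ univ.erase k, ((μ k)⁻¹ * (μ k - μ j)) :=
          Finset.prod_congr rfl fun j hj => by field_simp
      _ = _ := by
          rw [Finset.prod_mul_distrib, Finset.prod_const,
            Finset.card_erase_of_mem (mem_univ k), card_univ, Fintype.card_fin]
  have hp2 : (∏ j, ((μ k)⁻¹ - conj' (μ j)))
      = ((μ k)⁻¹) ^ q * ∏ j, (1 - μ k * conj' (μ j)) := by
    calc (∏ j, ((μ k)⁻¹ - conj' (μ j)))
        = ∏ j, ((μ k)⁻¹ * (1 - μ k * conj' (μ j))) :=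
          Finset.prod_congr rfl fun j hj => by field_simp
      _ = _ := by rw [Finset.prod_mul_distrib, Finset.prod_const, card_univ, Fintype.card_fin]
  have hE : (∏ j ∈ univ.erase k, (μ k - μ j)) ≠ 0 :=
    Finset.prod_ne_zero_iff.mpr fun j hj =>
      sub_ne_zero.mpr fun h => (Finset.mem_erase.mp hj).1 (hdist h.symm)
  have hlk : lam - μ k ≠ 0 := sub_ne_zero.mpr fun h => hne k h.symm
  rw [e1, e2, hp1, hp2, rOpt]
  have hxq : ((μ k)⁻¹ : ℂ) ^ q = (μ k)⁻¹ * ((μ k)⁻¹) ^ (q - 1) := by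
    rw [← pow_succ']; congr 1; omega
  rw [hxq]
  field_simp
  ring

lemma eval_P_lam (hlam : ‖lam‖ < 1) (hμ : ∀ k, ‖μ k‖ < 1)
    (hl : lam ≠ 0) : (P lam μ).eval (lam⁻¹) = 0 := by
  simp only [P, eval_sub, eval_prod, eval_finset_sum, eval_mul, eval_one, eval_C, eval_X]
  have e2 : (∑ k, rOpt lam μ k * ((1 - lam * lam⁻¹) * ∏ j ∈ univ.erase k, (1 - μ j * lam⁻¹))) = 0 :=
    Finset.sum_eq_zero fun k _ => by field_simp; simp
  have hp1 : (∏ j, (1 - μ j * lam⁻¹)) = (lam⁻¹) ^ q * ∏ j, (lam - μ j) := by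
    calc (∏ j, (1 - μ j * lam⁻¹)) = ∏ j, (lam⁻¹ * (lam - μ j)) :=
        Finset.prod_congr rfl fun j hj => by field_simp
    _ = _ := by rw [Finset.prod_mul_distrib, Finset.prod_const, card_univ, Fintype.card_fin]
  have hp2 : (∏ j, (lam⁻¹ - conj' (μ j))) = (lam⁻¹) ^ q * ∏ j, (1 - lam * conj' (μ j)) := by
    calc (∏ j, (lam⁻¹ - conj' (μ j))) = ∏ j, (lam⁻¹ * (1 - lam * conj' (μ j))) :=
        Finset.prod_congr rfl fun j hj => by field_simp
    _ = _ := by rw [Finset.prod_mul_distrib, Finset.prod_const, card_univ, Fintype.card_fin]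
  have hbl : bl lam μ * ∏ j, (1 - lam * conj' (μ j)) = ∏ j, (lam - μ j) := by
    rw [bl, ← Finset.prod_mul_distrib]
    refine Finset.prod_congr rfl fun j hj => ?_
    have h0 : (1 : ℂ) - lam * conj' (μ j) ≠ 0 :=
      one_sub_ne hlam (by simpa using hμ j)
    field_simp
  rw [e2, hp1, hp2]
  rw [mul_comm (lam⁻¹ ^ q) (∏ j, (1 - lam * conj' (μ j))), ← mul_assoc, hbl]
  ring

lemma coeff_q_prod_univ : (∏ j, (1 - C (μ j) * X) : Polynomial ℂ).coeff q = ∏ j, (-μ j) := by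
  have h := coeff_prod_of_natDegree_le (s := (univ : Finset (Fin q)))
    (fun j => (1 - C (μ j) * X : Polynomial ℂ)) 1
    (fun j _ => le_trans (natDegree_sub_le _ _)
      (by simpa using le_trans (natDegree_C_mul_le _ _) (by simp)))
  simp only [card_univ, Fintype.card_fin, mul_one] at h
  rw [h]
  exact Finset.prod_congr rfl fun j _ => by simp [Polynomial.coeff_one]

lemma coeff_q_term (k : Fin q) :
    ((1 - C lam * X) * ∏ j ∈ univ.erase k, (1 - C (μ j) * X) : Polynomial ℂ).coeff q
      = (-lam) * ∏ j ∈ univ.erase k, (-μ j) := by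
  set ν : Fin q → ℂ := Function.update μ k lam with hν
  have h1 : (1 - C lam * X) * (∏ j ∈ univ.erase k, (1 - C (μ j) * X) : Polynomial ℂ)
      = ∏ j, (1 - C (ν j) * X) := by
    rw [← Finset.mul_prod_erase univ (fun j => (1 - C (ν j) * X : Polynomial ℂ)) (mem_univ k)]
    congr 1
    · simp [hν]
    · exact Finset.prod_congr rfl fun j hj => by
        simp [hν, Function.update_of_ne (Finset.mem_erase.mp hj).1]
  rw [h1, coeff_q_prod_univ ν]
  rw [← Finset.mul_prod_erase univ (fun j => -ν j) (mem_univ k)]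
  congr 1
  · simp [hν]
  · exact Finset.prod_congr rfl fun j hj => by
      simp [hν, Function.update_of_ne (Finset.mem_erase.mp hj).1]

lemma coeff_q_bl_term (w : Fin q → ℂ) :
    (∏ j, (X - C (w j)) : Polynomial ℂ).coeff q = 1 := by
  have h := coeff_prod_of_natDegree_le (s := (univ : Finset (Fin q)))
    (fun j => (X - C (w j) : Polynomial ℂ)) 1 (fun j _ => natDegree_X_sub_C_le _)
  simp only [card_univ, Fintype.card_fin, mul_one] at h
  rw [h]
  simp

lemma coeff_P_q : (P lam μ).coeff q = (∏ j, (-μ j))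
    - (∑ k, rOpt lam μ k * ((-lam) * ∏ j ∈ univ.erase k, (-μ j))) - bl lam μ := by
  simp only [P, coeff_sub, finset_sum_coeff, coeff_C_mul, coeff_q_prod_univ, coeff_q_term,
    coeff_q_bl_term, mul_one]

lemma coeff_P_q_lam0 (hl : lam = 0) : (P lam μ).coeff q = 0 := by
  rw [coeff_P_q, hl]
  simp [bl]

lemma coeff_P_q_mu0 (k0 : Fin q) (hk0 : μ k0 = 0) (hl : lam ≠ 0)
    (hdist : Function.Injective μ) : (P lam μ).coeff q = 0 := by
  rw [coeff_P_q]
  have e1 : (∏ j, (-μ j)) = 0 := Finset.prod_eq_zero (mem_univ k0) (by simp [hk0])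
  have e2 : (∑ k, rOpt lam μ k * ((-lam) * ∏ j ∈ univ.erase k, (-μ j)))
      = rOpt lam μ k0 * ((-lam) * ∏ j ∈ univ.erase k0, (-μ j)) := by
    refine Finset.sum_eq_single k0 (fun k _ hk => ?_) (fun h => absurd (mem_univ k0) h)
    rw [Finset.prod_eq_zero (Finset.mem_erase.mpr ⟨Ne.symm hk, mem_univ k0⟩) (by simp [hk0]),
      mul_zero, mul_zero]
  have hE : (∏ j ∈ univ.erase k0, (-μ j)) ≠ 0 :=
    Finset.prod_ne_zero_iff.mpr fun j hj => neg_ne_zero.mpr fun h => (Finset.mem_erase.mp hj).1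
      (hdist (by rw [h, hk0]))
  have hre : (∏ j ∈ univ.erase k0, ((0:ℂ) - μ j)) = ∏ j ∈ univ.erase k0, (-μ j) :=
    Finset.prod_congr rfl fun j _ => by ring
  rw [e1, e2, rOpt, hk0, hre]
  have : (∏ j, (1 - (0:ℂ) * conj' (μ j))) = 1 := by simp
  rw [this]
  field_simp
  ring

lemma P_eq_zero (hlam : ‖lam‖ < 1) (hμ : ∀ k, ‖μ k‖ < 1)
    (hdist : Function.Injective μ) (hne : ∀ k, μ k ≠ lam) : P lam μ = 0 := by
  have hdeg : (P lam μ).natDegree ≤ q := natDegree_P_le lam μ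
  have hevmu : ∀ k : Fin q, μ k ≠ 0 → (P lam μ).eval ((μ k)⁻¹) = 0 :=
    fun k hk => eval_P_mu lam μ k hk hdist hne
  have hevlam : lam ≠ 0 → (P lam μ).eval (lam⁻¹) = 0 := eval_P_lam lam μ hlam hμ
  have hc0 : lam = 0 → (P lam μ).coeff q = 0 := coeff_P_q_lam0 lam μ
  have hcmu : ∀ k0 : Fin q, μ k0 = 0 → lam ≠ 0 → (P lam μ).coeff q = 0 :=
    fun k0 h hl => coeff_P_q_mu0 lam μ k0 h hl hdist
  set P := P lam μ
  by_cases hP : P = 0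
  · exact hP
  -- helper: if coeff q = 0 then natDegree < q
  have hlt : P.coeff q = 0 → P.natDegree < q := by
    intro h
    rcases lt_or_eq_of_le hdeg with h'|h'
    · exact h'
    · exact absurd (leadingCoeff_eq_zero.mp (by rw [leadingCoeff, h']; exact h)) hP
  by_cases hl : lam = 0
  · -- all μ k ≠ 0; q roots
    refine eq_zero_of_natDegree_lt_card_of_eval_eq_zero P
      (f := fun k : Fin q => (μ k)⁻¹) (fun a b h => hdist (inv_injective h))
      (fun k => hevmu k (fun h => hne k (h.trans hl.symm))) ?_
    simpa using hlt (hc0 hl)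
  · by_cases h0 : ∃ k0, μ k0 = 0
    · obtain ⟨k0, hk0⟩ := h0
      set s : Finset ℂ := insert lam⁻¹ ((univ.erase k0).image fun k => (μ k)⁻¹) with hs
      refine eq_zero_of_natDegree_lt_card_of_eval_eq_zero' P s ?_ ?_
      · intro x hx
        rw [hs, Finset.mem_insert] at hx
        rcases hx with rfl | hx
        · exact hevlam hl
        · obtain ⟨k, hk, rfl⟩ := Finset.mem_image.mp hx
          refine hevmu k fun h => (Finset.mem_erase.mp hk).1 (hdist (h.trans hk0.symm))
      · have hni : lam⁻¹ ∉ (univ.erase k0).image fun k => (μ k)⁻¹ := by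
          intro hmem
          obtain ⟨k, hk, he⟩ := Finset.mem_image.mp hmem
          exact hne k (inv_injective he)
        have hci : #((univ.erase k0).image fun k => (μ k)⁻¹) = q - 1 := by
          rw [Finset.card_image_of_injOn (fun a _ b _ h => hdist (inv_injective h)),
            Finset.card_erase_of_mem (mem_univ k0), card_univ, Fintype.card_fin]
        have hq1 : 1 ≤ q := k0.pos
        have := hlt (hcmu k0 hk0 hl)
        rw [hs, Finset.card_insert_of_notMem hni, hci]
        omega
    · push_neg at h0
      set s : Finset ℂ := insert lam⁻¹ (univ.image fun k => (μ k)⁻¹) with hs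
      refine eq_zero_of_natDegree_lt_card_of_eval_eq_zero' P s ?_ ?_
      · intro x hx
        rw [hs, Finset.mem_insert] at hx
        rcases hx with rfl | hx
        · exact hevlam hl
        · obtain ⟨k, _, rfl⟩ := Finset.mem_image.mp hx
          exact hevmu k (h0 k)
      · have hni : lam⁻¹ ∉ univ.image fun k => (μ k)⁻¹ := by
          intro hmem
          obtain ⟨k, hk, he⟩ := Finset.mem_image.mp hmem
          exact hne k (inv_injective he)
        have hci : #(univ.image fun k => (μ k)⁻¹) = q := by
          rw [Finset.card_image_of_injOn (fun a _ b _ h => hdist (inv_injective h)),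
            card_univ, Fintype.card_fin]
        rw [hs, Finset.card_insert_of_notMem hni, hci]
        omega


/-- the key rational-function identity -/
lemma keyval (hlam : ‖lam‖ < 1) (hμ : ∀ k, ‖μ k‖ < 1)
    (hdist : Function.Injective μ) (hne : ∀ k, μ k ≠ lam)
    (v : ℂ) (hv : ‖v‖ < 1) :
    (1 - lam * v)⁻¹ - ∑ k, rOpt lam μ k * (1 - μ k * v)⁻¹
      = bl lam μ * (∏ j, (v - conj' (μ j))) * ((1 - lam * v) * ∏ j, (1 - μ j * v))⁻¹ := by
  have h1 : (1 : ℂ) - lam * v ≠ 0 := one_sub_ne hlam hv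
  have hA : (∏ j, (1 - μ j * v)) ≠ 0 :=
    Finset.prod_ne_zero_iff.mpr fun j _ => one_sub_ne (hμ j) hv
  have hPv := congrArg (eval v) (P_eq_zero lam μ hlam hμ hdist hne)
  simp only [P, eval_sub, eval_prod, eval_finset_sum, eval_mul, eval_one, eval_C, eval_X,
    eval_zero] at hPv
  apply mul_right_cancel₀ (mul_ne_zero h1 hA)
  have hBk : ∀ k : Fin q, rOpt lam μ k * (1 - μ k * v)⁻¹ * ((1 - lam * v) * ∏ j, (1 - μ j * v))
      = rOpt lam μ k * ((1 - lam * v) * ∏ j ∈ univ.erase k, (1 - μ j * v)) := by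
    intro k
    rw [← Finset.mul_prod_erase univ (fun j => (1 - μ j * v)) (mem_univ k)]
    have hk : (1 : ℂ) - μ k * v ≠ 0 := one_sub_ne (hμ k) hv
    field_simp
  calc ((1 - lam * v)⁻¹ - ∑ k, rOpt lam μ k * (1 - μ k * v)⁻¹) * ((1 - lam * v) * ∏ j, (1 - μ j * v))
      = (∏ j, (1 - μ j * v)) - ∑ k, rOpt lam μ k *
          ((1 - lam * v) * ∏ j ∈ univ.erase k, (1 - μ j * v)) := by
        rw [sub_mul, Finset.sum_mul]
        congr 1
        · field_simp
        · exact Finset.sum_congr rfl fun k _ => hBk k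
    _ = bl lam μ * ∏ j, (v - conj' (μ j)) := by linear_combination hPv
    _ = bl lam μ * (∏ j, (v - conj' (μ j))) * ((1 - lam * v) * ∏ j, (1 - μ j * v))⁻¹ *
          ((1 - lam * v) * ∏ j, (1 - μ j * v)) := by
        rw [mul_assoc, inv_mul_cancel₀ (mul_ne_zero h1 hA), mul_one]

/-- coefficient sequence of the residual -/
noncomputable def hh (r : Fin q → ℂ) (n : ℕ) : ℂ := lam ^ n - ∑ k, r k * μ k ^ n

lemma hasSum_hh (hlam : ‖lam‖ < 1) (hμ : ∀ k, ‖μ k‖ < 1)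
    (r : Fin q → ℂ) (v : ℂ) (hv : ‖v‖ < 1) :
    HasSum (fun n => hh lam μ r n * v ^ n)
      ((1 - lam * v)⁻¹ - ∑ k, r k * (1 - μ k * v)⁻¹) := by
  have h1 := hasSum_aux hlam hv
  have h3 : HasSum (fun n => ∑ k, r k * (μ k ^ n * v ^ n)) (∑ k, r k * (1 - μ k * v)⁻¹) :=
    hasSum_sum fun k _ => (hasSum_aux (hμ k) hv).mul_left _
  have h4 := h1.sub h3
  convert h4 using 1
  · rfl
  funext n
  simp only [hh, sub_mul, Finset.sum_mul, mul_assoc]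

lemma hasSum_ortho (hlam : ‖lam‖ < 1) (hμ : ∀ k, ‖μ k‖ < 1)
    (hdist : Function.Injective μ) (hne : ∀ k, μ k ≠ lam) (j : Fin q) :
    HasSum (fun n => hh lam μ (rOpt lam μ) n * (conj' (μ j)) ^ n) 0 := by
  have hvj : ‖conj' (μ j)‖ < 1 := by simpa using hμ j
  have h := hasSum_hh lam μ hlam hμ (rOpt lam μ) (conj' (μ j)) hvj
  have hval : (1 - lam * conj' (μ j))⁻¹ - ∑ k, rOpt lam μ k * (1 - μ k * conj' (μ j))⁻¹ = 0 := by
    rw [keyval lam μ hlam hμ hdist hne (conj' (μ j)) hvj,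
      Finset.prod_eq_zero (mem_univ j) (sub_self (conj' (μ j)))]
    simp
  rwa [hval] at h

lemma hasSum_val (hlam : ‖lam‖ < 1) (hμ : ∀ k, ‖μ k‖ < 1)
    (hdist : Function.Injective μ) (hne : ∀ k, μ k ≠ lam) :
    HasSum (fun n => hh lam μ (rOpt lam μ) n * (conj' lam) ^ n)
      (bl lam μ * conj' (bl lam μ) * (1 - lam * conj' lam)⁻¹) := by
  have hvl : ‖conj' lam‖ < 1 := by simpa using hlam
  have h := hasSum_hh lam μ hlam hμ (rOpt lam μ) (conj' lam) hvl
  have hval : (1 - lam * conj' lam)⁻¹ - ∑ k, rOpt lam μ k * (1 - μ k * conj' lam)⁻¹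
      = bl lam μ * conj' (bl lam μ) * (1 - lam * conj' lam)⁻¹ := by
    rw [keyval lam μ hlam hμ hdist hne (conj' lam) hvl]
    have hcb : conj' (bl lam μ) * ∏ j, (1 - μ j * conj' lam) = ∏ j, (conj' lam - conj' (μ j)) := by
      rw [bl, map_prod, ← Finset.prod_mul_distrib]
      refine Finset.prod_congr rfl fun j _ => ?_
      have h0 : (1 : ℂ) - conj' lam * μ j ≠ 0 :=
        one_sub_ne (by simpa using hlam) (hμ j)
      rw [map_mul, map_sub, map_inv₀, map_sub, map_mul, map_one]
      simp only [Complex.conj_conj]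
      rw [mul_comm (μ j) (conj' lam), mul_assoc, inv_mul_cancel₀ h0, mul_one]
    rw [← hcb]
    have hl0 : (1 : ℂ) - lam * conj' lam ≠ 0 := one_sub_ne hlam hvl
    have hA : (∏ j, (1 - μ j * conj' lam)) ≠ 0 :=
      Finset.prod_ne_zero_iff.mpr fun j _ => one_sub_ne (hμ j) hvl
    generalize (∏ j, (1 - μ j * conj' lam)) = A at hA ⊢
    field_simp
  rwa [hval] at h

end Main

end H2B

theorem h2_min_error_blaschke (q : ℕ) (hq : 1 ≤ q) (lam : ℂ) (μ : Fin q → ℂ)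
    (hlam : ‖lam‖ < 1) (hμ : ∀ k, ‖μ k‖ < 1)
    (hdist : Function.Injective μ) (hne : ∀ k, μ k ≠ lam) :
    sInf { E : ℝ | ∃ r : Fin q → ℂ, E = h2SqError q lam μ r }
      = (1 / (1 - ‖lam‖ ^ 2)) * ∏ k, pseudoHyp lam (μ k) ^ 2 := by
  classical
  open H2B Finset in
  -- abbreviations
  set c : ℂ := H2B.bl lam μ with hc
  set Eopt : ℂ := c * (starRingEnd ℂ) c * (1 - lam * (starRingEnd ℂ) lam)⁻¹ with hEopt
  have hvl : ‖(starRingEnd ℂ) lam‖ < 1 := by simpa using hlam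
  have hvk : ∀ k, ‖(starRingEnd ℂ) (μ k)‖ < 1 := fun k => by simpa using hμ k
  -- S1 : optimal residual squared norm
  have S1 : HasSum (fun n => H2B.hh lam μ (H2B.rOpt lam μ) n *
      (starRingEnd ℂ) (H2B.hh lam μ (H2B.rOpt lam μ) n)) Eopt := by
    have h := (H2B.hasSum_val lam μ hlam hμ hdist hne).sub
      (hasSum_sum (fun k (_ : k ∈ univ) =>
        (H2B.hasSum_ortho lam μ hlam hμ hdist hne k).mul_left ((starRingEnd ℂ) (H2B.rOpt lam μ k))))
    simp only [mul_zero, Finset.sum_const_zero, sub_zero] at h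
    convert h using 1
    · rfl
    funext n
    simp only [H2B.hh, map_sub, map_sum, map_mul, map_pow, mul_sub, Finset.mul_sum]
    congr 1
    refine Finset.sum_congr rfl fun k _ => by ring
  -- the difference sequence for a general r
  have main : ∀ r : Fin q → ℂ, ∃ D : ℂ, 0 ≤ D.re ∧
      HasSum (fun n => H2B.hh lam μ r n * (starRingEnd ℂ) (H2B.hh lam μ r n)) (Eopt + D) ∧
      (r = H2B.rOpt lam μ → D = 0) := by
    intro r
    set e : Fin q → ℂ := fun k => H2B.rOpt lam μ k - r k with he
    set d : ℕ → ℂ := fun n => ∑ k, e k * μ k ^ n with hd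
    have hdecomp : ∀ n, H2B.hh lam μ r n = H2B.hh lam μ (H2B.rOpt lam μ) n + d n := by
      intro n
      simp only [H2B.hh, hd, he, sub_mul, Finset.sum_sub_distrib]
      ring
    have hdv : ∀ k : Fin q, HasSum (fun n => d n * ((starRingEnd ℂ) (μ k)) ^ n)
        (∑ j, e j * (1 - μ j * (starRingEnd ℂ) (μ k))⁻¹) := by
      intro k
      have h := hasSum_sum (fun j (_ : j ∈ univ) =>
        (H2B.hasSum_aux (hμ j) (hvk k)).mul_left (e j))
      convert h using 1
      · rfl
      funext n
      simp only [hd, Finset.sum_mul, mul_assoc]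
    set D : ℂ := ∑ k, (starRingEnd ℂ) (e k) * ∑ j, e j * (1 - μ j * (starRingEnd ℂ) (μ k))⁻¹
      with hD
    have S4 : HasSum (fun n => d n * (starRingEnd ℂ) (d n)) D := by
      have h := hasSum_sum (fun k (_ : k ∈ univ) => (hdv k).mul_left ((starRingEnd ℂ) (e k)))
      convert h using 1
      · rfl
      funext n
      simp only [hd, map_sum, map_mul, map_pow, Finset.mul_sum]
      exact Finset.sum_congr rfl fun k _ => by ring
    have S2 : HasSum (fun n => H2B.hh lam μ (H2B.rOpt lam μ) n * (starRingEnd ℂ) (d n)) 0 := by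
      have h := hasSum_sum (fun k (_ : k ∈ univ) =>
        (H2B.hasSum_ortho lam μ hlam hμ hdist hne k).mul_left ((starRingEnd ℂ) (e k)))
      simp only [mul_zero, Finset.sum_const_zero] at h
      convert h using 1
      · rfl
      funext n
      simp only [hd, map_sum, map_mul, map_pow, Finset.mul_sum]
      refine Finset.sum_congr rfl fun k _ => by ring
    have S3 : HasSum (fun n => d n * (starRingEnd ℂ) (H2B.hh lam μ (H2B.rOpt lam μ) n)) 0 := by
      have h := S2.star
      simp only [star_zero] at h
      convert h using 1
      funext n
      simp only [star_mul', Complex.star_def, Complex.conj_conj]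
      ring
    refine ⟨D, ?_, ?_, ?_⟩
    · have hre := S4.mapL Complex.reCLM
      have hterm : ∀ n, (0 : ℝ) ≤ Complex.reCLM (d n * (starRingEnd ℂ) (d n)) := fun n => by
        simp only [Complex.reCLM_apply, Complex.mul_conj]
        simp [Complex.normSq_nonneg]
      simpa using hasSum_le hterm hasSum_zero hre
    · have h := (S1.add S2).add (S3.add S4)
      simp only [add_zero, zero_add] at h
      convert h using 1
      funext n
      rw [hdecomp n]
      simp only [map_add]
      ring
    · intro hr
      have : ∀ k, e k = 0 := fun k => by rw [he]; simp [hr]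
      simp only [hD, this, map_zero, zero_mul, Finset.sum_const_zero]
  -- value of the squared error
  have herr : ∀ r : Fin q → ℂ, ∃ D : ℂ, 0 ≤ D.re ∧
      h2SqError q lam μ r = Eopt.re + D.re ∧ (r = H2B.rOpt lam μ → D = 0) := by
    intro r
    obtain ⟨D, hD1, hD2, hD3⟩ := main r
    refine ⟨D, hD1, ?_, hD3⟩
    have hre := hD2.mapL Complex.reCLM
    have hterm : ∀ n : ℕ, ‖lam ^ n - ∑ k, r k * μ k ^ n‖ ^ 2
        = Complex.reCLM (H2B.hh lam μ r n * (starRingEnd ℂ) (H2B.hh lam μ r n)) := by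
      intro n
      simp only [Complex.reCLM_apply, Complex.mul_conj, H2B.hh]
      rw [Complex.sq_norm]
      simp
    rw [h2SqError]
    simp_rw [hterm]
    rw [hre.tsum_eq]
    simp
  -- compute Eopt.re
  have habs : ‖c‖ = ∏ k, pseudoHyp lam (μ k) := by
    rw [hc, H2B.bl, norm_prod]
    refine Finset.prod_congr rfl fun k _ => ?_
    rw [pseudoHyp, div_eq_mul_inv, mul_comm ((starRingEnd ℂ) (μ k)) lam]
  have hEoptre : Eopt.re = (1 / (1 - ‖lam‖ ^ 2)) * ∏ k, pseudoHyp lam (μ k) ^ 2 := by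
    have h1 : Eopt = ((Complex.normSq c * (1 - Complex.normSq lam)⁻¹ : ℝ) : ℂ) := by
      rw [hEopt, Complex.mul_conj, Complex.mul_conj]
      norm_cast
    rw [h1, Complex.ofReal_re, ← Complex.sq_norm, ← Complex.sq_norm, habs, ← Finset.prod_pow]
    rw [one_div]
    ring
  -- conclude via sInf
  have hlow : ∀ E ∈ { E : ℝ | ∃ r : Fin q → ℂ, E = h2SqError q lam μ r }, Eopt.re ≤ E := by
    rintro E ⟨r, rfl⟩
    obtain ⟨D, hD1, hD2, -⟩ := herr r
    rw [hD2]
    linarith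
  have hmem : Eopt.re ∈ { E : ℝ | ∃ r : Fin q → ℂ, E = h2SqError q lam μ r } := by
    refine ⟨H2B.rOpt lam μ, ?_⟩
    obtain ⟨D, hD1, hD2, hD3⟩ := herr (H2B.rOpt lam μ)
    rw [hD2, hD3 rfl]
    simp
  rw [← hEoptre]
  exact le_antisymm (csInf_le ⟨Eopt.re, hlow⟩ hmem) (le_csInf ⟨Eopt.re, hmem⟩ hlow)
end

section
/- Let q ≥ 2 and η_1,...,η_q be q-th Tsuji points of a compact set D ⊂ 𝔻. Then there exists an index ℓ such that ∏_{k≠ℓ}[η_ℓ,η_k]_h ≤ (∏_{1≤k<l≤q}[η_k,η_l]_h)^{2/q}, and consequently max_{z∈D} (∏_{k=1}^q [z,η_k]_h)^{1/q} ≤ (∏_{1≤k<l≤q}[η_k,η_l]_h)^{2/q²}. -/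
noncomputable def pairProd (q : ℕ) (μ : Fin q → ℂ) : ℝ :=
  ∏ p ∈ Finset.univ.filter (fun p : Fin q × Fin q => p.1 < p.2), pseudoHyp (μ p.1) (μ p.2)

lemma pseudoHyp_nonneg_s9 (a b : ℂ) : 0 ≤ pseudoHyp a b := norm_nonneg _

lemma pseudoHyp_symm (a b : ℂ) : pseudoHyp a b = pseudoHyp b a := by
  unfold pseudoHyp
  rw [norm_div, norm_div, norm_sub_rev]
  congr 1
  rw [← Complex.norm_conj (1 - (starRingEnd ℂ) b * a)]
  congr 1
  simp [map_sub, map_mul, mul_comm]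

lemma normSq_key (z μ : ℂ) :
    Complex.normSq (1 - (starRingEnd ℂ) μ * z) - Complex.normSq (z - μ)
      = (1 - Complex.normSq μ) * (1 - Complex.normSq z) := by
  simp [Complex.normSq_apply, Complex.sub_re, Complex.sub_im, Complex.mul_re, Complex.mul_im,
    Complex.one_re, Complex.one_im, Complex.conj_re, Complex.conj_im]
  ring

lemma denom_pos {z μ : ℂ} (hz : ‖z‖ < 1) (hμ : ‖μ‖ < 1) :
    0 < ‖1 - (starRingEnd ℂ) μ * z‖ := by
  have h : Complex.normSq (z - μ) < Complex.normSq (1 - (starRingEnd ℂ) μ * z) := by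
    have h1 : Complex.normSq μ < 1 := by
      have := Complex.sq_norm μ; nlinarith [norm_nonneg μ]
    have h2 : Complex.normSq z < 1 := by
      have := Complex.sq_norm z; nlinarith [norm_nonneg z]
    nlinarith [normSq_key z μ]
  have := Complex.normSq_nonneg (z - μ)
  have := (Complex.normSq_pos (z := 1 - (starRingEnd ℂ) μ * z)).mp (by linarith)
  exact norm_pos_iff.mpr this

lemma pseudoHyp_lt_one {z μ : ℂ} (hz : ‖z‖ < 1) (hμ : ‖μ‖ < 1) :
    pseudoHyp z μ < 1 := by
  unfold pseudoHyp
  rw [norm_div, div_lt_one (denom_pos hz hμ)]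
  have h1 : Complex.normSq μ < 1 := by
    have := Complex.sq_norm μ; nlinarith [norm_nonneg μ]
  have h2 : Complex.normSq z < 1 := by
    have := Complex.sq_norm z; nlinarith [norm_nonneg z]
  have h : Complex.normSq (z - μ) < Complex.normSq (1 - (starRingEnd ℂ) μ * z) := by
    nlinarith [normSq_key z μ]
  have := Complex.sq_norm (z - μ)
  have := Complex.sq_norm (1 - (starRingEnd ℂ) μ * z)
  nlinarith [norm_nonneg (z - μ), denom_pos hz hμ]

lemma pseudoHyp_pos {z μ : ℂ} (hz : ‖z‖ < 1) (hμ : ‖μ‖ < 1)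
    (hne : z ≠ μ) : 0 < pseudoHyp z μ := by
  unfold pseudoHyp
  rw [norm_div]
  exact div_pos (norm_pos_iff.mpr (sub_ne_zero.mpr hne)) (denom_pos hz hμ)

open Finset in
lemma Qsq (q : ℕ) (ν : Fin q → ℂ) :
    (∏ p ∈ Finset.univ.filter (fun p : Fin q × Fin q => p.1 ≠ p.2), pseudoHyp (ν p.1) (ν p.2))
      = pairProd q ν ^ 2 := by
  have hset : Finset.univ.filter (fun p : Fin q × Fin q => p.1 ≠ p.2)
      = Finset.univ.filter (fun p : Fin q × Fin q => p.1 < p.2)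
        ∪ Finset.univ.filter (fun p : Fin q × Fin q => p.2 < p.1) := by
    ext ⟨a, b⟩
    simp only [mem_filter, mem_union, mem_univ, true_and]
    constructor
    · intro h; rcases lt_or_gt_of_ne h with h | h
      · exact Or.inl h
      · exact Or.inr h
    · rintro (h | h); exacts [ne_of_lt h, ne_of_gt h]
  have hdisj : Disjoint (Finset.univ.filter (fun p : Fin q × Fin q => p.1 < p.2))
      (Finset.univ.filter (fun p : Fin q × Fin q => p.2 < p.1)) := by
    rw [Finset.disjoint_left]
    rintro ⟨a, b⟩ ha hb
    simp only [mem_filter] at ha hb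
    exact absurd ha.2 (not_lt_of_gt hb.2)
  have hswap : (∏ p ∈ Finset.univ.filter (fun p : Fin q × Fin q => p.2 < p.1),
      pseudoHyp (ν p.1) (ν p.2)) = pairProd q ν := by
    unfold pairProd
    refine Finset.prod_nbij' Prod.swap Prod.swap ?_ ?_ ?_ ?_ ?_
    · rintro ⟨a, b⟩ h; simp only [mem_filter, mem_univ, true_and] at h ⊢; exact h
    · rintro ⟨a, b⟩ h; simp only [mem_filter, mem_univ, true_and] at h ⊢; exact h
    · rintro ⟨a, b⟩ _; rfl
    · rintro ⟨a, b⟩ _; rfl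
    · rintro ⟨a, b⟩ _; exact pseudoHyp_symm _ _
  rw [hset, Finset.prod_union hdisj, hswap]
  unfold pairProd
  ring

open Finset in
lemma Qrows (q : ℕ) (ν : Fin q → ℂ) :
    (∏ p ∈ Finset.univ.filter (fun p : Fin q × Fin q => p.1 ≠ p.2), pseudoHyp (ν p.1) (ν p.2))
      = ∏ l, ∏ k ∈ Finset.univ.erase l, pseudoHyp (ν l) (ν k) := by
  have : ∀ l : Fin q, (Finset.univ.erase l) = Finset.univ.filter (fun k => ¬ (l = k)) := by
    intro l; ext k; simp [eq_comm, ne_comm]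
  have hrw : (∏ l, ∏ k ∈ Finset.univ.erase l, pseudoHyp (ν l) (ν k))
      = ∏ l, ∏ k, if ¬ (l = k) then pseudoHyp (ν l) (ν k) else 1 :=
    Finset.prod_congr rfl (fun l _ => by rw [this l, Finset.prod_filter])
  rw [hrw, ← Finset.prod_product', Finset.prod_filter, ← Finset.univ_product_univ]

open Finset in
lemma Qsplit (q : ℕ) (ν : Fin q → ℂ) (l : Fin q) :
    (∏ p ∈ Finset.univ.filter (fun p : Fin q × Fin q => p.1 ≠ p.2), pseudoHyp (ν p.1) (ν p.2))
      = (∏ k ∈ Finset.univ.erase l, pseudoHyp (ν l) (ν k)) *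
        (∏ k ∈ Finset.univ.erase l, pseudoHyp (ν k) (ν l)) *
        (∏ p ∈ Finset.univ.filter (fun p : Fin q × Fin q => p.1 ≠ p.2 ∧ p.1 ≠ l ∧ p.2 ≠ l),
          pseudoHyp (ν p.1) (ν p.2)) := by
  have hset : Finset.univ.filter (fun p : Fin q × Fin q => p.1 ≠ p.2)
      = ((Finset.univ.erase l).image (fun k => (l, k))
          ∪ (Finset.univ.erase l).image (fun k => (k, l)))
        ∪ Finset.univ.filter (fun p : Fin q × Fin q => p.1 ≠ p.2 ∧ p.1 ≠ l ∧ p.2 ≠ l) := by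
    ext ⟨a, b⟩
    simp only [mem_filter, mem_union, mem_image, mem_erase, mem_univ, true_and, and_true,
      Prod.mk.injEq]
    constructor
    · intro h
      by_cases ha : a = l
      · exact Or.inl (Or.inl ⟨b, by subst ha; exact ne_comm.mp h, ha.symm, rfl⟩)
      · by_cases hb : b = l
        · exact Or.inl (Or.inr ⟨a, by subst hb; exact h, rfl, hb.symm⟩)
        · exact Or.inr ⟨h, ha, hb⟩
    · rintro ((⟨k, hk, rfl, rfl⟩ | ⟨k, hk, rfl, rfl⟩) | ⟨h, _, _⟩)
      · exact ne_comm.mp hk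
      · exact hk
      · exact h
  have hd1 : Disjoint ((Finset.univ.erase l).image (fun k : Fin q => (l, k)))
      ((Finset.univ.erase l).image (fun k : Fin q => (k, l))) := by
    rw [Finset.disjoint_left]
    rintro ⟨a, b⟩ ha hb
    simp only [mem_image, mem_erase, mem_univ, and_true, Prod.mk.injEq] at ha hb
    obtain ⟨k, hk, rfl, rfl⟩ := ha
    obtain ⟨k', hk', rfl, h2⟩ := hb
    exact hk' rfl
  have hd2 : Disjoint ((Finset.univ.erase l).image (fun k : Fin q => (l, k))
      ∪ (Finset.univ.erase l).image (fun k : Fin q => (k, l)))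
      (Finset.univ.filter (fun p : Fin q × Fin q => p.1 ≠ p.2 ∧ p.1 ≠ l ∧ p.2 ≠ l)) := by
    rw [Finset.disjoint_left]
    rintro ⟨a, b⟩ ha hb
    simp only [mem_union, mem_image, mem_erase, mem_univ, and_true, Prod.mk.injEq] at ha
    simp only [mem_filter, mem_univ, true_and] at hb
    rcases ha with ⟨k, hk, rfl, rfl⟩ | ⟨k, hk, rfl, rfl⟩
    · exact hb.2.1 rfl
    · exact hb.2.2 rfl
  rw [hset, Finset.prod_union hd2, Finset.prod_union hd1,
    Finset.prod_image (by rintro k1 _ k2 _ h; exact (Prod.mk.injEq _ _ _ _ ▸ h).2),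
    Finset.prod_image (by rintro k1 _ k2 _ h; exact (Prod.mk.injEq _ _ _ _ ▸ h).1)]

open Finset in
theorem tsuji_points_chebyshev_bound (q : ℕ) (hq : 2 ≤ q) (D : Set ℂ)
    (hDc : IsCompact D) (hD : D ⊆ {z : ℂ | ‖z‖ < 1})
    (hcard : ∃ f : Fin q → ℂ, Function.Injective f ∧ ∀ i, f i ∈ D)
    (η : Fin q → ℂ) (hη : ∀ k, η k ∈ D)
    (hmax : ∀ μ : Fin q → ℂ, (∀ k, μ k ∈ D) → pairProd q μ ≤ pairProd q η) :
    (∃ l : Fin q, ∏ k ∈ Finset.univ.erase l, pseudoHyp (η l) (η k)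
        ≤ pairProd q η ^ ((2 : ℝ) / q)) ∧
    ∀ z ∈ D, (∏ k, pseudoHyp z (η k)) ^ ((1 : ℝ) / q)
        ≤ pairProd q η ^ ((2 : ℝ) / (q ^ 2 : ℕ)) := by
  classical
  haveI : Nonempty (Fin q) := ⟨⟨0, by omega⟩⟩
  set A : Fin q → ℝ := fun l => ∏ k ∈ Finset.univ.erase l, pseudoHyp (η l) (η k) with hA
  set P := pairProd q η with hP
  have hηd : ∀ k, ‖η k‖ < 1 := fun k => hD (hη k)
  have hPnn : 0 ≤ P := Finset.prod_nonneg fun p _ => pseudoHyp_nonneg_s9 _ _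
  have hPpos : 0 < P := by
    obtain ⟨f, hfinj, hfD⟩ := hcard
    have hfp : 0 < pairProd q f := by
      refine Finset.prod_pos ?_
      rintro ⟨a, b⟩ hp
      simp only [Finset.mem_filter] at hp
      exact pseudoHyp_pos (hD (hfD a)) (hD (hfD b))
        (fun h => absurd (hfinj h) (ne_of_lt hp.2))
    exact lt_of_lt_of_le hfp (hmax f hfD)
  have hAnn : ∀ l, 0 ≤ A l := fun l => Finset.prod_nonneg fun k _ => pseudoHyp_nonneg_s9 _ _
  have hprodA : ∏ l, A l = P ^ 2 := by rw [← Qrows, Qsq]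
  have hq0 : (0:ℝ) < (q:ℝ) := by
    have : 0 < q := by omega
    exact_mod_cast this
  have hqne : (q:ℝ) ≠ 0 := ne_of_gt hq0
  -- key estimate
  have key : ∀ z ∈ D, ∀ l : Fin q,
      (∏ k ∈ Finset.univ.erase l, pseudoHyp z (η k)) ≤ A l := by
    intro z hz l
    set μ := Function.update η l z with hμdef
    have hμD : ∀ k, μ k ∈ D := by
      intro k
      by_cases h : k = l
      · subst h; rw [hμdef, Function.update_self]; exact hz
      · rw [hμdef, Function.update_of_ne h]; exact hη k
    have h1 : pairProd q μ ≤ P := hmax μ hμD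
    have hμnn : 0 ≤ pairProd q μ := Finset.prod_nonneg fun p _ => pseudoHyp_nonneg_s9 _ _
    have h2 : pairProd q μ ^ 2 ≤ P ^ 2 := by nlinarith
    have hQμ := Qsplit q μ l
    have hQη := Qsplit q η l
    rw [Qsq] at hQμ hQη
    set T := ∏ k ∈ Finset.univ.erase l, pseudoHyp z (η k) with hT
    set C := ∏ p ∈ Finset.univ.filter
        (fun p : Fin q × Fin q => p.1 ≠ p.2 ∧ p.1 ≠ l ∧ p.2 ≠ l),
        pseudoHyp (η p.1) (η p.2) with hC
    have e1 : (∏ k ∈ Finset.univ.erase l, pseudoHyp (μ l) (μ k)) = T := by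
      refine Finset.prod_congr rfl fun k hk => ?_
      rw [Finset.mem_erase] at hk
      rw [hμdef, Function.update_self, Function.update_of_ne hk.1]
    have e2 : (∏ k ∈ Finset.univ.erase l, pseudoHyp (μ k) (μ l)) = T := by
      rw [← e1]
      exact Finset.prod_congr rfl fun k _ => pseudoHyp_symm _ _
    have e3 : (∏ p ∈ Finset.univ.filter
        (fun p : Fin q × Fin q => p.1 ≠ p.2 ∧ p.1 ≠ l ∧ p.2 ≠ l),
        pseudoHyp (μ p.1) (μ p.2)) = C := by
      refine Finset.prod_congr rfl ?_
      rintro ⟨a, b⟩ hp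
      simp only [Finset.mem_filter] at hp
      rw [hμdef, Function.update_of_ne hp.2.2.1, Function.update_of_ne hp.2.2.2]
    have e4 : (∏ k ∈ Finset.univ.erase l, pseudoHyp (η k) (η l)) = A l := by
      rw [hA]
      exact Finset.prod_congr rfl fun k _ => pseudoHyp_symm _ _
    rw [e1, e2, e3] at hQμ
    rw [e4] at hQη
    have hCnn : 0 ≤ C := Finset.prod_nonneg fun p _ => pseudoHyp_nonneg_s9 _ _
    have hCpos : 0 < C := by
      rcases lt_or_eq_of_le hCnn with h | h
      · exact h
      · exfalso
        have : P ^ 2 = 0 := by rw [hQη, ← h]; ring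
        nlinarith
    have hTnn : 0 ≤ T := Finset.prod_nonneg fun k _ => pseudoHyp_nonneg_s9 _ _
    have h3 : T * T * C ≤ A l * A l * C := by rw [← hQμ, ← hQη]; exact h2
    have h4 : T * T ≤ A l * A l := le_of_mul_le_mul_right (by linarith [h3]) hCpos
    nlinarith [hAnn l]
  constructor
  · obtain ⟨l, -, hl⟩ := Finset.exists_min_image Finset.univ A Finset.univ_nonempty
    refine ⟨l, ?_⟩
    have hpow : A l ^ q ≤ P ^ 2 := by
      calc A l ^ q = ∏ _k : Fin q, A l := by
            rw [Finset.prod_const, Finset.card_univ, Fintype.card_fin]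
        _ ≤ ∏ k, A k := Finset.prod_le_prod (fun k _ => hAnn l)
            (fun k _ => hl k (Finset.mem_univ k))
        _ = P ^ 2 := hprodA
    have h1 : A l = ((A l ^ q : ℝ)) ^ ((1:ℝ)/q) := by
      rw [← Real.rpow_natCast (A l) q, ← Real.rpow_mul (hAnn l), mul_one_div,
        div_self hqne, Real.rpow_one]
    have h2 : ((P ^ 2 : ℝ)) ^ ((1:ℝ)/q) = P ^ ((2:ℝ)/q) := by
      rw [← Real.rpow_natCast P 2, ← Real.rpow_mul hPnn]
      congr 1
      push_cast
      ring
    calc A l = ((A l ^ q : ℝ)) ^ ((1:ℝ)/q) := h1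
      _ ≤ ((P ^ 2 : ℝ)) ^ ((1:ℝ)/q) := Real.rpow_le_rpow (pow_nonneg (hAnn l) q) hpow (by positivity)
      _ = P ^ ((2:ℝ)/q) := h2
  · intro z hz
    set x := ∏ k, pseudoHyp z (η k) with hx
    have hxnn : 0 ≤ x := Finset.prod_nonneg fun k _ => pseudoHyp_nonneg_s9 _ _
    have hxle : ∀ l, x ≤ A l := by
      intro l
      have h1 := key z hz l
      have hTnn : 0 ≤ ∏ k ∈ Finset.univ.erase l, pseudoHyp z (η k) :=
        Finset.prod_nonneg fun k _ => pseudoHyp_nonneg_s9 _ _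
      have hxeq : x = pseudoHyp z (η l) * ∏ k ∈ Finset.univ.erase l, pseudoHyp z (η k) :=
        (Finset.mul_prod_erase Finset.univ _ (Finset.mem_univ l)).symm
      have hlt : pseudoHyp z (η l) < 1 := pseudoHyp_lt_one (hD hz) (hηd l)
      calc x = pseudoHyp z (η l) * ∏ k ∈ Finset.univ.erase l, pseudoHyp z (η k) := hxeq
        _ ≤ ∏ k ∈ Finset.univ.erase l, pseudoHyp z (η k) :=
            mul_le_of_le_one_left hTnn (le_of_lt hlt)
        _ ≤ A l := h1
    have hxq : x ^ q ≤ P ^ 2 := by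
      calc x ^ q = ∏ _l : Fin q, x := by
            rw [Finset.prod_const, Finset.card_univ, Fintype.card_fin]
        _ ≤ ∏ l, A l := Finset.prod_le_prod (fun l _ => hxnn) (fun l _ => hxle l)
        _ = P ^ 2 := hprodA
    have e : x ^ ((1:ℝ)/q) = ((x ^ q : ℝ)) ^ ((1:ℝ)/(q:ℝ)^2) := by
      rw [← Real.rpow_natCast x q, ← Real.rpow_mul hxnn]
      congr 1
      field_simp
    have e2 : P ^ ((2:ℝ)/(q^2 : ℕ)) = ((P ^ 2 : ℝ)) ^ ((1:ℝ)/(q:ℝ)^2) := by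
      rw [← Real.rpow_natCast P 2, ← Real.rpow_mul hPnn]
      congr 1
      push_cast
      ring
    rw [e, e2]
    exact Real.rpow_le_rpow (pow_nonneg hxnn q) hxq (by positivity)
end

section
/- Let G(z) = Σ_{j=1}^n R_j/(z-λ_j) with matrices R_j ∈ ℂ^{p×m} and distinct λ_j ∈ 𝔻, and let μ_1,...,μ_q ∈ 𝔻 be pairwise distinct with μ_k ≠ λ_j for all j,k. Then the minimal H₂ approximation error using the basis 1/(z-μ_k) satisfies min over Ř_1,...,Ř_q ∈ ℂ^{p×m} of ‖G - Σ_k Ř_k/(z-μ_k)‖₂ ≤ Σ_{j=1}^n (‖R_j‖/√(1-|λ_j|²)) · ∏_{k=1}^q [λ_j,μ_k]_h. -/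
attribute [local instance] Matrix.frobeniusNormedAddCommGroup

/-- The squared H₂ error of approximating `G(z) = Σ_j R_j/(z-λ_j)` by
`Σ_k Ř_k/(z-μ_k)`, computed coefficient-wise from the expansions in powers of `z⁻¹`. -/
noncomputable def h2SqErrorMat (p m n q : ℕ) (R : Fin n → Matrix (Fin p) (Fin m) ℂ)
    (lam : Fin n → ℂ) (μ : Fin q → ℂ) (Rc : Fin q → Matrix (Fin p) (Fin m) ℂ) : ℝ :=
  ∑' N : ℕ, ‖(∑ j, lam j ^ N • R j) - ∑ k, μ k ^ N • Rc k‖ ^ 2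

attribute [local instance] Matrix.frobeniusNormedSpace

open Complex Finset

noncomputable def funA (μ ζ : ℂ) : ℂ := (1 - μ * (starRingEnd ℂ) μ) / (μ - ζ)
noncomputable def funB (μ ζ : ℂ) : ℂ := (1 - (starRingEnd ℂ) μ * ζ) / (ζ - μ)

lemma one_sub_ne {x y : ℂ} (hx : ‖x‖ < 1) (hy : ‖y‖ ≤ 1) :
    1 - x * (starRingEnd ℂ) y ≠ 0 := by
  intro h
  have habs : ‖x * (starRingEnd ℂ) y‖ < 1 := by
    rw [norm_mul, Complex.norm_conj]
    calc ‖x‖ * ‖y‖ ≤ ‖x‖ * 1 :=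
          mul_le_mul_of_nonneg_left hy (norm_nonneg x)
      _ < 1 := by simpa using hx
  have h1 : x * (starRingEnd ℂ) y = 1 := by linear_combination -h
  rw [h1] at habs; simp at habs

lemma pair_core (x μ ν w : ℂ) (h1 : 1 - x*w ≠ 0) (h2 : 1 - x*ν ≠ 0) (h3 : 1 - μ*w ≠ 0)
    (h4 : 1 - μ*ν ≠ 0) (h5 : x - μ ≠ 0) (h5' : μ - x ≠ 0) (h6 : w - ν ≠ 0) (h6' : ν - w ≠ 0) :
    (1 - ν*x)/(x-μ) * ((1 - μ*w)/(w-ν)) * (1 - x*w)⁻¹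
      + (1 - ν*x)/(x-μ) * ((1 - ν*μ)/(ν-w)) * (1 - x*ν)⁻¹
      + (1 - μ*ν)/(μ-x) * ((1 - μ*w)/(w-ν)) * (1 - μ*w)⁻¹
      + (1 - μ*ν)/(μ-x) * ((1 - ν*μ)/(ν-w)) * (1 - μ*ν)⁻¹
    = (1 - x*w)⁻¹ := by
  have h34 : (1 - μ*ν)/(μ-x) * ((1 - μ*w)/(w-ν)) * (1 - μ*w)⁻¹
      + (1 - μ*ν)/(μ-x) * ((1 - ν*μ)/(ν-w)) * (1 - μ*ν)⁻¹ = 0 := by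
    field_simp
    ring
  have h2' : 1 - ν*x ≠ 0 := by rw [mul_comm]; exact h2
  have h12 : (1 - ν*x)/(x-μ) * ((1 - μ*w)/(w-ν)) * (1 - x*w)⁻¹
      + (1 - ν*x)/(x-μ) * ((1 - ν*μ)/(ν-w)) * (1 - x*ν)⁻¹ = (1 - x*w)⁻¹ := by
    field_simp
    ring
  rw [add_assoc]
  rw [h34, add_zero, h12]

lemma pair_identity {μ x y : ℂ} (hμ : ‖μ‖ < 1) (hx : ‖x‖ < 1)
    (hy : ‖y‖ < 1) (hxμ : x ≠ μ) (hyμ : y ≠ μ) :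
    funB μ x * (starRingEnd ℂ) (funB μ y) * (1 - x * (starRingEnd ℂ) y)⁻¹
      + funB μ x * (starRingEnd ℂ) (funA μ y) * (1 - x * (starRingEnd ℂ) μ)⁻¹
      + funA μ x * (starRingEnd ℂ) (funB μ y) * (1 - μ * (starRingEnd ℂ) y)⁻¹
      + funA μ x * (starRingEnd ℂ) (funA μ y) * (1 - μ * (starRingEnd ℂ) μ)⁻¹
    = (1 - x * (starRingEnd ℂ) y)⁻¹ := by
  have h1 : (1 : ℂ) - x * (starRingEnd ℂ) y ≠ 0 := one_sub_ne hx hy.le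
  have h2 : (1 : ℂ) - x * (starRingEnd ℂ) μ ≠ 0 := one_sub_ne hx hμ.le
  have h3 : (1 : ℂ) - μ * (starRingEnd ℂ) y ≠ 0 := one_sub_ne hμ hy.le
  have h4 : (1 : ℂ) - μ * (starRingEnd ℂ) μ ≠ 0 := one_sub_ne hμ hμ.le
  have h5 : x - μ ≠ 0 := sub_ne_zero.mpr hxμ
  have h5' : μ - x ≠ 0 := fun h => h5 (by linear_combination -h)
  have h6 : (starRingEnd ℂ) y - (starRingEnd ℂ) μ ≠ 0 := by
    rw [sub_ne_zero]
    exact fun h => hyμ ((starRingEnd ℂ).injective h)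
  have h6' : (starRingEnd ℂ) μ - (starRingEnd ℂ) y ≠ 0 := fun h => h6 (by linear_combination -h)
  simp only [funA, funB, map_div₀, map_sub, map_mul, map_one, Complex.conj_conj]
  exact pair_core x μ ((starRingEnd ℂ) μ) ((starRingEnd ℂ) y) h1 h2 h3 h4 h5 h5' h6 h6'


lemma gram_hasSum {ι : Type} [Fintype ι] (z : ι → ℂ) (hz : ∀ i, ‖z i‖ < 1)
    (a : ι → ℂ) :
    HasSum (fun N : ℕ => ‖∑ i, a i * z i ^ N‖ ^ 2)
      ((∑ i, ∑ j, a i * (starRingEnd ℂ) (a j) * (1 - z i * (starRingEnd ℂ) (z j))⁻¹).re) := by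
  have key : ∀ i j : ι, HasSum (fun N : ℕ => (a i * (starRingEnd ℂ) (a j)) * (z i * (starRingEnd ℂ) (z j)) ^ N)
      (a i * (starRingEnd ℂ) (a j) * (1 - z i * (starRingEnd ℂ) (z j))⁻¹) := by
    intro i j
    refine HasSum.mul_left _ (hasSum_geometric_of_norm_lt_one ?_)
    rw [norm_mul, Complex.norm_conj]
    calc ‖z i‖ * ‖z j‖ ≤ ‖z i‖ * 1 :=
          mul_le_mul_of_nonneg_left (hz j).le (norm_nonneg _)
      _ < 1 := by simpa using hz i
  have H : HasSum (fun N : ℕ => ∑ i : ι, ∑ j : ι,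
      (a i * (starRingEnd ℂ) (a j)) * (z i * (starRingEnd ℂ) (z j)) ^ N)
      (∑ i, ∑ j, a i * (starRingEnd ℂ) (a j) * (1 - z i * (starRingEnd ℂ) (z j))⁻¹) :=
    hasSum_sum fun i _ => hasSum_sum fun j _ => key i j
  have H2 := Complex.hasSum_re H
  convert H2 using 2 with N
  have : (∑ i : ι, ∑ j : ι, (a i * (starRingEnd ℂ) (a j)) * (z i * (starRingEnd ℂ) (z j)) ^ N)
      = (∑ i, a i * z i ^ N) * (starRingEnd ℂ) (∑ j, a j * z j ^ N) := by
    rw [map_sum, Finset.sum_mul_sum]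
    refine Finset.sum_congr rfl fun i _ => Finset.sum_congr rfl fun j _ => ?_
    rw [map_mul, map_pow]
    ring
  rw [this, Complex.mul_conj]
  simp [Complex.sq_norm]



noncomputable def gram2 {ι : Type} [Fintype ι] (a z : ι → ℂ) : ℂ :=
  ∑ i, ∑ j, a i * (starRingEnd ℂ) (a j) * (1 - z i * (starRingEnd ℂ) (z j))⁻¹

lemma gram_step {ι : Type} [Fintype ι] [DecidableEq ι] (z : ι → ℂ)
    (hz : ∀ i, ‖z i‖ < 1) (μ : ℂ) (hμ : ‖μ‖ < 1)
    (i₀ : ι) (hzi : z i₀ = μ) (a : ι → ℂ) (ha : a i₀ = 0)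
    (hzne : ∀ i, i ≠ i₀ → z i ≠ μ) (f : ι → ℂ)
    (hf : ∀ i, i ≠ i₀ → f i = a i * funB μ (z i))
    (hfi : f i₀ = ∑ i, a i * funA μ (z i)) :
    gram2 f z = gram2 a z := by
  classical
  set T : ℂ := ∑ i, a i * funA μ (z i) with hT
  set F : ι → ℂ := fun i => a i * funB μ (z i) with hF
  have hdecomp : ∀ i, f i = F i + (if i = i₀ then T else 0) := by
    intro i
    by_cases h : i = i₀
    · subst h; simp [hF, ha, hfi]
    · simp [h, hf i h, hF]
  have expand : gram2 f z
      = (∑ i, ∑ j, F i * (starRingEnd ℂ) (F j) * (1 - z i * (starRingEnd ℂ) (z j))⁻¹)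
        + (∑ i, F i * (starRingEnd ℂ) T * (1 - z i * (starRingEnd ℂ) μ)⁻¹)
        + (∑ j, T * (starRingEnd ℂ) (F j) * (1 - μ * (starRingEnd ℂ) (z j))⁻¹)
        + T * (starRingEnd ℂ) T * (1 - μ * (starRingEnd ℂ) μ)⁻¹ := by
    unfold gram2
    simp only [hdecomp]
    have step1 : ∀ i j : ι,
        (F i + (if i = i₀ then T else 0)) * (starRingEnd ℂ) (F j + (if j = i₀ then T else 0))
          * (1 - z i * (starRingEnd ℂ) (z j))⁻¹
        = F i * (starRingEnd ℂ) (F j) * (1 - z i * (starRingEnd ℂ) (z j))⁻¹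
          + (if j = i₀ then F i * (starRingEnd ℂ) T * (1 - z i * (starRingEnd ℂ) (z j))⁻¹ else 0)
          + (if i = i₀ then T * (starRingEnd ℂ) (F j) * (1 - z i * (starRingEnd ℂ) (z j))⁻¹ else 0)
          + (if i = i₀ then (if j = i₀ then T * (starRingEnd ℂ) T * (1 - z i * (starRingEnd ℂ) (z j))⁻¹ else 0) else 0) := by
      intro i j
      by_cases hi : i = i₀ <;> by_cases hj : j = i₀ <;> simp [hi, hj] <;> ring
    simp only [step1, Finset.sum_add_distrib, Finset.sum_ite_irrel, Finset.sum_const_zero,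
      Finset.sum_ite_eq' Finset.univ i₀, Finset.mem_univ, if_true, hzi]
  have key : ∀ i j : ι,
      F i * (starRingEnd ℂ) (F j) * (1 - z i * (starRingEnd ℂ) (z j))⁻¹
        + F i * (starRingEnd ℂ) (a j * funA μ (z j)) * (1 - z i * (starRingEnd ℂ) μ)⁻¹
        + (a i * funA μ (z i)) * (starRingEnd ℂ) (F j) * (1 - μ * (starRingEnd ℂ) (z j))⁻¹
        + (a i * funA μ (z i)) * (starRingEnd ℂ) (a j * funA μ (z j)) * (1 - μ * (starRingEnd ℂ) μ)⁻¹
      = a i * (starRingEnd ℂ) (a j) * (1 - z i * (starRingEnd ℂ) (z j))⁻¹ := by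
    intro i j
    by_cases hi : i = i₀
    · simp [hi, hF, ha]
    by_cases hj : j = i₀
    · simp [hj, hF, ha]
    have hp := pair_identity hμ (hz i) (hz j) (hzne i hi) (hzne j hj)
    calc F i * (starRingEnd ℂ) (F j) * (1 - z i * (starRingEnd ℂ) (z j))⁻¹
        + F i * (starRingEnd ℂ) (a j * funA μ (z j)) * (1 - z i * (starRingEnd ℂ) μ)⁻¹
        + (a i * funA μ (z i)) * (starRingEnd ℂ) (F j) * (1 - μ * (starRingEnd ℂ) (z j))⁻¹
        + (a i * funA μ (z i)) * (starRingEnd ℂ) (a j * funA μ (z j)) * (1 - μ * (starRingEnd ℂ) μ)⁻¹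
        = a i * (starRingEnd ℂ) (a j) *
            (funB μ (z i) * (starRingEnd ℂ) (funB μ (z j)) * (1 - z i * (starRingEnd ℂ) (z j))⁻¹
              + funB μ (z i) * (starRingEnd ℂ) (funA μ (z j)) * (1 - z i * (starRingEnd ℂ) μ)⁻¹
              + funA μ (z i) * (starRingEnd ℂ) (funB μ (z j)) * (1 - μ * (starRingEnd ℂ) (z j))⁻¹
              + funA μ (z i) * (starRingEnd ℂ) (funA μ (z j)) * (1 - μ * (starRingEnd ℂ) μ)⁻¹) := by
          simp only [hF, map_mul]; ring
      _ = a i * (starRingEnd ℂ) (a j) * (1 - z i * (starRingEnd ℂ) (z j))⁻¹ := by rw [hp]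
  have g2 : (∑ i, F i * (starRingEnd ℂ) T * (1 - z i * (starRingEnd ℂ) μ)⁻¹)
      = ∑ i, ∑ j, F i * (starRingEnd ℂ) (a j * funA μ (z j)) * (1 - z i * (starRingEnd ℂ) μ)⁻¹ := by
    refine Finset.sum_congr rfl fun i _ => ?_
    rw [hT, map_sum, Finset.mul_sum, Finset.sum_mul]
  have g3 : (∑ j, T * (starRingEnd ℂ) (F j) * (1 - μ * (starRingEnd ℂ) (z j))⁻¹)
      = ∑ i, ∑ j, (a i * funA μ (z i)) * (starRingEnd ℂ) (F j) * (1 - μ * (starRingEnd ℂ) (z j))⁻¹ := by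
    rw [Finset.sum_comm]
    refine Finset.sum_congr rfl fun j _ => ?_
    rw [hT, Finset.sum_mul, Finset.sum_mul]
  have g4 : T * (starRingEnd ℂ) T * (1 - μ * (starRingEnd ℂ) μ)⁻¹
      = ∑ i, ∑ j, (a i * funA μ (z i)) * (starRingEnd ℂ) (a j * funA μ (z j))
          * (1 - μ * (starRingEnd ℂ) μ)⁻¹ := by
    rw [hT, map_sum]
    simp only [Finset.sum_mul, Finset.mul_sum]
    exact Finset.sum_comm
  rw [expand, g2, g3, g4]
  simp only [← Finset.sum_add_distrib]
  rw [gram2]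
  exact Finset.sum_congr rfl fun i _ => Finset.sum_congr rfl fun j _ => key i j

section recursion

variable (q : ℕ) (lam : ℂ) (μ : Fin q → ℂ)

noncomputable def zfun : Option (Fin q) → ℂ := fun o => o.elim lam μ

noncomputable def coeffs : ℕ → Option (Fin q) → ℂ
  | 0 => fun o => o.elim 1 (fun _ => 0)
  | (k+1) => fun o =>
      if h : k < q then
        if o = some ⟨k, h⟩ then
          ∑ i, coeffs k i * funA (μ ⟨k, h⟩) (zfun q lam μ i)
        else coeffs k o * funB (μ ⟨k, h⟩) (zfun q lam μ o)
      else coeffs k o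

variable (hlam : ‖lam‖ < 1) (hμ : ∀ k, ‖μ k‖ < 1)
  (hμ_inj : Function.Injective μ) (hne : ∀ k, μ k ≠ lam)

lemma zfun_lt (_ : ‖lam‖ < 1) (_ : ∀ k, ‖μ k‖ < 1) :
    ∀ i, ‖zfun q lam μ i‖ < 1 := by
  rintro (_|j) <;> simp [zfun, *]

lemma coeffs_eq_zero : ∀ k (j : Fin q), k ≤ (j : ℕ) → coeffs q lam μ k (some j) = 0 := by
  intro k
  induction k with
  | zero => intro j _; simp [coeffs]
  | succ k ih =>
      intro j hj
      have hkq : k < q := lt_of_lt_of_le (Nat.lt_of_lt_of_le (Nat.lt_succ_self k) hj) j.isLt.le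
      have hne' : some j ≠ some (⟨k, hkq⟩ : Fin q) := by
        simp only [ne_eq, Option.some_inj]
        intro h
        have : (j : ℕ) = k := by rw [h]
        omega
      simp only [coeffs, dif_pos hkq, if_neg hne']
      rw [ih j (by omega), zero_mul]

include hlam hμ hμ_inj hne in
lemma coeffs_gram : ∀ k, k ≤ q →
    gram2 (coeffs q lam μ k) (zfun q lam μ) = gram2 (coeffs q lam μ 0) (zfun q lam μ) := by
  intro k
  induction k with
  | zero => intro _; rfl
  | succ k ih =>
      intro hk
      have hkq : k < q := hk
      rw [← ih (le_of_lt hk)]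
      refine gram_step (zfun q lam μ) (zfun_lt q lam μ hlam hμ) (μ ⟨k, hkq⟩) (hμ _)
        (some ⟨k, hkq⟩) rfl (coeffs q lam μ k) (coeffs_eq_zero q lam μ k ⟨k, hkq⟩ le_rfl)
        ?_ (coeffs q lam μ (k+1)) ?_ ?_
      · rintro (_|j) hj
        · exact fun h => hne _ h.symm
        · intro h
          exact hj (by simpa using congrArg some (hμ_inj h))
      · intro i hi
        simp only [coeffs, dif_pos hkq, if_neg hi]
      · simp [coeffs, dif_pos hkq]

lemma coeffs_none : ∀ k, coeffs q lam μ k none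
    = ∏ j ∈ Finset.univ.filter (fun j : Fin q => (j : ℕ) < k), funB (μ j) lam := by
  intro k
  induction k with
  | zero => simp [coeffs]
  | succ k ih =>
      by_cases hkq : k < q
      · have hmem : (⟨k, hkq⟩ : Fin q) ∉ Finset.univ.filter (fun j : Fin q => (j : ℕ) < k) := by
          simp
        have hset : Finset.univ.filter (fun j : Fin q => (j : ℕ) < k + 1)
            = insert ⟨k, hkq⟩ (Finset.univ.filter (fun j : Fin q => (j : ℕ) < k)) := by
          ext j
          simp only [Finset.mem_filter, Finset.mem_univ, true_and, Finset.mem_insert]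
          constructor
          · intro h
            rcases Nat.lt_succ_iff_lt_or_eq.mp h with h | h
            · exact Or.inr h
            · exact Or.inl (Fin.ext h)
          · rintro (h | h)
            · rw [h]; exact Nat.lt_succ_self k
            · omega
        rw [hset, Finset.prod_insert hmem]
        have hnone : (none : Option (Fin q)) ≠ some (⟨k, hkq⟩ : Fin q) := fun h => Option.noConfusion rfl (heq_of_eq h)
        simp only [coeffs, dif_pos hkq, if_neg hnone, ih]
        simp [zfun, mul_comm]
      · have hset : Finset.univ.filter (fun j : Fin q => (j : ℕ) < k + 1)
            = Finset.univ.filter (fun j : Fin q => (j : ℕ) < k) := by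
          ext j
          have := j.isLt
          simp only [Finset.mem_filter, Finset.mem_univ, true_and]
          omega
        simp only [coeffs, dif_neg hkq, hset, ih]

end recursion

lemma scalar_key (q : ℕ) (μ : Fin q → ℂ) (hμ : ∀ k, ‖μ k‖ < 1)
    (hμ_inj : Function.Injective μ) (lam : ℂ) (hlam : ‖lam‖ < 1)
    (hne : ∀ k, μ k ≠ lam) :
    ∃ r : Fin q → ℂ, HasSum (fun N : ℕ => ‖lam ^ N - ∑ k, r k * μ k ^ N‖ ^ 2)
      ((∏ k, pseudoHyp lam (μ k)) ^ 2 / (1 - ‖lam‖ ^ 2)) := by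
  classical
  have hzlt := zfun_lt q lam μ hlam hμ
  have hbval : coeffs q lam μ q none = ∏ j : Fin q, funB (μ j) lam := by
    rw [coeffs_none]
    congr 1
    ext j
    simp [j.isLt]
  have hBne : ∀ j : Fin q, funB (μ j) lam ≠ 0 := by
    intro j
    apply div_ne_zero
    · intro h
      apply one_sub_ne hlam (hμ j).le
      rw [← h]; ring
    · exact sub_ne_zero.mpr (fun h => hne j (by rw [h]))
  have hbne : (∏ j : Fin q, funB (μ j) lam) ≠ 0 :=
    Finset.prod_ne_zero_iff.mpr fun j _ => hBne j
  set c : ℂ := (∏ j : Fin q, funB (μ j) lam)⁻¹ with hcdef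
  have hcb : c * coeffs q lam μ q none = 1 := by
    rw [hbval, hcdef]
    exact inv_mul_cancel₀ hbne
  refine ⟨fun k => -(c * coeffs q lam μ q (some k)), ?_⟩
  have hseq : ∀ N : ℕ, lam ^ N - ∑ k, -(c * coeffs q lam μ q (some k)) * μ k ^ N
      = ∑ i, (c * coeffs q lam μ q i) * zfun q lam μ i ^ N := by
    intro N
    rw [Fintype.sum_option]
    have h1 : c * coeffs q lam μ q none * zfun q lam μ none ^ N = lam ^ N := by
      rw [hcb, one_mul]; rfl
    rw [h1]
    have h2 : ∀ k : Fin q, c * coeffs q lam μ q (some k) * zfun q lam μ (some k) ^ N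
        = -(-(c * coeffs q lam μ q (some k)) * μ k ^ N) := by
      intro k; simp [zfun]
    simp only [h2, Finset.sum_neg_distrib, sub_eq_add_neg]
  have H := gram_hasSum (zfun q lam μ) hzlt (fun i => c * coeffs q lam μ q i)
  have hgram : (∑ i, ∑ j, (c * coeffs q lam μ q i) * (starRingEnd ℂ) (c * coeffs q lam μ q j)
        * (1 - zfun q lam μ i * (starRingEnd ℂ) (zfun q lam μ j))⁻¹)
      = c * (starRingEnd ℂ) c * gram2 (coeffs q lam μ q) (zfun q lam μ) := by
    rw [gram2, Finset.mul_sum]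
    refine Finset.sum_congr rfl fun i _ => ?_
    rw [Finset.mul_sum]
    refine Finset.sum_congr rfl fun j _ => ?_
    simp only [map_mul]
    ring
  have hgram0 : gram2 (coeffs q lam μ 0) (zfun q lam μ)
      = (1 - lam * (starRingEnd ℂ) lam)⁻¹ := by
    rw [gram2]
    simp [coeffs, zfun, Fintype.sum_option]
  have hgramq := coeffs_gram q lam μ hlam hμ hμ_inj hne q le_rfl
  have habs : ‖c‖ = ∏ k, pseudoHyp lam (μ k) := by
    rw [hcdef, norm_inv, norm_prod, ← Finset.prod_inv_distrib]
    refine Finset.prod_congr rfl fun j _ => ?_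
    rw [funB, pseudoHyp, ← norm_inv, inv_div]
  have hval : (∑ i, ∑ j, (c * coeffs q lam μ q i) * (starRingEnd ℂ) (c * coeffs q lam μ q j)
        * (1 - zfun q lam μ i * (starRingEnd ℂ) (zfun q lam μ j))⁻¹).re
      = (∏ k, pseudoHyp lam (μ k)) ^ 2 / (1 - ‖lam‖ ^ 2) := by
    rw [hgram, hgramq, hgram0]
    have h1 : c * (starRingEnd ℂ) c = ((‖c‖ ^ 2 : ℝ) : ℂ) := by
      rw [Complex.mul_conj, Complex.sq_norm]
    have h2 : 1 - lam * (starRingEnd ℂ) lam = (((1 - ‖lam‖ ^ 2 : ℝ)) : ℂ) := by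
      rw [Complex.mul_conj, Complex.sq_norm]
      simp
    rw [h1, h2, ← Complex.ofReal_inv, ← Complex.ofReal_mul, Complex.ofReal_re, habs,
      div_eq_mul_inv]
  rw [← hval]
  have heq : (fun N : ℕ => ‖lam ^ N - ∑ k, -(c * coeffs q lam μ q (some k)) * μ k ^ N‖ ^ 2)
      = fun N : ℕ => ‖∑ i, (c * coeffs q lam μ q i) * zfun q lam μ i ^ N‖ ^ 2 := by
    funext N
    rw [hseq N]
  rw [heq]
  exact H


lemma cs_tsum {f g : ℕ → ℝ} (hf0 : ∀ n, 0 ≤ f n) (hg0 : ∀ n, 0 ≤ g n)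
    (hf : Summable fun n => f n ^ 2) (hg : Summable fun n => g n ^ 2) :
    Summable (fun n => f n * g n) ∧
      ∑' n, f n * g n ≤ Real.sqrt (∑' n, f n ^ 2) * Real.sqrt (∑' n, g n ^ 2) := by
  have hsum : Summable (fun n => f n * g n) := by
    refine Summable.of_nonneg_of_le (fun n => mul_nonneg (hf0 n) (hg0 n))
      (fun n => ?_) ((hf.add hg).div_const 2)
    nlinarith [sq_nonneg (f n - g n)]
  refine ⟨hsum, Summable.tsum_le_of_sum_le hsum fun s => ?_⟩
  have h1 : (∑ i ∈ s, f i * g i) ≤ Real.sqrt ((∑ i ∈ s, f i ^ 2) * ∑ i ∈ s, g i ^ 2) := by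
    rw [← Real.sqrt_sq (Finset.sum_nonneg fun i _ => mul_nonneg (hf0 i) (hg0 i))]
    exact Real.sqrt_le_sqrt (Finset.sum_mul_sq_le_sq_mul_sq s f g)
  refine h1.trans ?_
  rw [Real.sqrt_mul (Finset.sum_nonneg fun i _ => sq_nonneg _)]
  have h2 := Real.sqrt_le_sqrt (Summable.sum_le_tsum s (fun i _ => sq_nonneg (f i)) hf)
  have h3 := Real.sqrt_le_sqrt (Summable.sum_le_tsum s (fun i _ => sq_nonneg (g i)) hg)
  exact mul_le_mul h2 h3 (Real.sqrt_nonneg _) (Real.sqrt_nonneg _)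

lemma mink2 {f g : ℕ → ℝ} (hf0 : ∀ n, 0 ≤ f n) (hg0 : ∀ n, 0 ≤ g n)
    (hf : Summable fun n => f n ^ 2) (hg : Summable fun n => g n ^ 2) :
    Summable (fun n => (f n + g n) ^ 2) ∧
      Real.sqrt (∑' n, (f n + g n) ^ 2)
        ≤ Real.sqrt (∑' n, f n ^ 2) + Real.sqrt (∑' n, g n ^ 2) := by
  obtain ⟨hfg, hcs⟩ := cs_tsum hf0 hg0 hf hg
  have hexp : ∀ n, (f n + g n) ^ 2 = f n ^ 2 + 2 * (f n * g n) + g n ^ 2 := fun n => by ring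
  have hsum : Summable (fun n => (f n + g n) ^ 2) := by
    simp only [hexp]
    exact (hf.add ((hfg.mul_left 2))).add hg
  refine ⟨hsum, ?_⟩
  rw [show (∑' n, (f n + g n) ^ 2) = (∑' n, f n ^ 2) + 2 * (∑' n, f n * g n) + (∑' n, g n ^ 2) by
    rw [tsum_congr hexp, Summable.tsum_add (hf.add (hfg.mul_left 2)) hg, Summable.tsum_add hf (hfg.mul_left 2),
      tsum_mul_left]]
  have h1 : (∑' n, f n ^ 2) + 2 * (∑' n, f n * g n) + (∑' n, g n ^ 2)
      ≤ (Real.sqrt (∑' n, f n ^ 2) + Real.sqrt (∑' n, g n ^ 2)) ^ 2 := by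
    have hf2 : Real.sqrt (∑' n, f n ^ 2) ^ 2 = ∑' n, f n ^ 2 :=
      Real.sq_sqrt (tsum_nonneg fun n => sq_nonneg _)
    have hg2 : Real.sqrt (∑' n, g n ^ 2) ^ 2 = ∑' n, g n ^ 2 :=
      Real.sq_sqrt (tsum_nonneg fun n => sq_nonneg _)
    nlinarith [hcs]
  calc Real.sqrt ((∑' n, f n ^ 2) + 2 * (∑' n, f n * g n) + (∑' n, g n ^ 2))
      ≤ Real.sqrt ((Real.sqrt (∑' n, f n ^ 2) + Real.sqrt (∑' n, g n ^ 2)) ^ 2) :=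
        Real.sqrt_le_sqrt h1
    _ = Real.sqrt (∑' n, f n ^ 2) + Real.sqrt (∑' n, g n ^ 2) :=
        Real.sqrt_sq (by positivity)

lemma minkN {ι : Type} (s : Finset ι) (g : ι → ℕ → ℝ) (h0 : ∀ i, ∀ N, 0 ≤ g i N)
    (hs : ∀ i, Summable fun N => g i N ^ 2) :
    Summable (fun N => (∑ i ∈ s, g i N) ^ 2) ∧
      Real.sqrt (∑' N, (∑ i ∈ s, g i N) ^ 2) ≤ ∑ i ∈ s, Real.sqrt (∑' N, g i N ^ 2) := by
  classical
  induction s using Finset.induction_on with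
  | empty =>
      constructor
      · simpa using summable_zero
      · simp
  | @insert a s ha ih =>
      have hrest0 : ∀ N, 0 ≤ ∑ i ∈ s, g i N := fun N => Finset.sum_nonneg fun i _ => h0 i N
      obtain ⟨hsum1, hle1⟩ := ih
      obtain ⟨hsum2, hle2⟩ := mink2 (h0 a) hrest0 (hs a) hsum1
      constructor
      · refine hsum2.congr fun N => ?_
        rw [Finset.sum_insert ha]
      · rw [Finset.sum_insert ha]
        calc Real.sqrt (∑' N, (∑ i ∈ insert a s, g i N) ^ 2)
            = Real.sqrt (∑' N, (g a N + ∑ i ∈ s, g i N) ^ 2) := by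
              congr 1; exact tsum_congr fun N => by rw [Finset.sum_insert ha]
          _ ≤ Real.sqrt (∑' N, g a N ^ 2) + Real.sqrt (∑' N, (∑ i ∈ s, g i N) ^ 2) := hle2
          _ ≤ Real.sqrt (∑' N, g a N ^ 2) + ∑ i ∈ s, Real.sqrt (∑' N, g i N ^ 2) := by
              linarith


theorem h2_matrix_approx_bound (p m n q : ℕ) (hn : 1 ≤ n) (hq : 1 ≤ q)
    (R : Fin n → Matrix (Fin p) (Fin m) ℂ) (lam : Fin n → ℂ) (μ : Fin q → ℂ)
    (hlam : ∀ j, ‖lam j‖ < 1) (hμ : ∀ k, ‖μ k‖ < 1)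
    (hlam_inj : Function.Injective lam) (hμ_inj : Function.Injective μ)
    (hne : ∀ j k, μ k ≠ lam j) :
    ∃ Rc : Fin q → Matrix (Fin p) (Fin m) ℂ,
      Real.sqrt (h2SqErrorMat p m n q R lam μ Rc)
        ≤ ∑ j, (‖R j‖ / Real.sqrt (1 - ‖lam j‖ ^ 2)) *
            ∏ k, pseudoHyp (lam j) (μ k) := by
  classical
  have hscal := fun j : Fin n =>
    scalar_key q μ hμ hμ_inj (lam j) (hlam j) (fun k => hne j k)
  choose r hr using hscal
  refine ⟨fun k => ∑ j, r j k • R j, ?_⟩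
  set g : Fin n → ℕ → ℝ :=
    fun j N => ‖lam j ^ N - ∑ k, r j k * μ k ^ N‖ * ‖R j‖ with hgdef
  have hg0 : ∀ j N, 0 ≤ g j N := fun j N =>
    mul_nonneg (norm_nonneg _) (norm_nonneg _)
  have hrsq : ∀ j, HasSum (fun N => g j N ^ 2)
      (((∏ k, pseudoHyp (lam j) (μ k)) ^ 2 / (1 - ‖lam j‖ ^ 2)) * ‖R j‖ ^ 2) := by
    intro j
    have := (hr j).mul_right (‖R j‖ ^ 2)
    refine this.congr_fun fun N => ?_
    rw [hgdef, mul_pow]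
  have hgsq : ∀ j, Summable fun N => g j N ^ 2 := fun j => (hrsq j).summable
  have herr : ∀ N : ℕ, ‖(∑ j, lam j ^ N • R j) - ∑ k, μ k ^ N • (∑ j, r j k • R j)‖
      ≤ ∑ j, g j N := by
    intro N
    have h0 : ∑ k, μ k ^ N • (∑ j, r j k • R j)
        = ∑ j, (∑ k, r j k * μ k ^ N) • R j := by
      simp only [Finset.smul_sum, smul_smul]
      rw [Finset.sum_comm]
      refine Finset.sum_congr rfl fun j _ => ?_
      rw [← Finset.sum_smul]
      congr 1
      exact Finset.sum_congr rfl fun k _ => mul_comm _ _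
    have h1 : (∑ j, lam j ^ N • R j) - ∑ k, μ k ^ N • (∑ j, r j k • R j)
        = ∑ j, (lam j ^ N - ∑ k, r j k * μ k ^ N) • R j := by
      rw [h0, ← Finset.sum_sub_distrib]
      exact Finset.sum_congr rfl fun j _ => (sub_smul _ _ _).symm
    rw [h1]
    refine (norm_sum_le _ _).trans ?_
    refine Finset.sum_le_sum fun j _ => ?_
    rw [norm_smul]
  obtain ⟨hSsum, hSle⟩ := minkN Finset.univ g hg0 hgsq
  have hsq_sum : Summable fun N : ℕ =>
      ‖(∑ j, lam j ^ N • R j) - ∑ k, μ k ^ N • (∑ j, r j k • R j)‖ ^ 2 := by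
    refine Summable.of_nonneg_of_le (fun N => sq_nonneg _) (fun N => ?_) hSsum
    exact pow_le_pow_left₀ (norm_nonneg _) (herr N) 2
  have hmain : h2SqErrorMat p m n q R lam μ (fun k => ∑ j, r j k • R j)
      ≤ ∑' N, (∑ j, g j N) ^ 2 := by
    rw [h2SqErrorMat]
    refine Summable.tsum_le_tsum (fun N => ?_) hsq_sum hSsum
    exact pow_le_pow_left₀ (norm_nonneg _) (herr N) 2
  calc Real.sqrt (h2SqErrorMat p m n q R lam μ (fun k => ∑ j, r j k • R j))
      ≤ Real.sqrt (∑' N, (∑ j, g j N) ^ 2) := Real.sqrt_le_sqrt hmain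
    _ ≤ ∑ j, Real.sqrt (∑' N, g j N ^ 2) := hSle
    _ = ∑ j, (‖R j‖ / Real.sqrt (1 - ‖lam j‖ ^ 2)) *
          ∏ k, pseudoHyp (lam j) (μ k) := by
        refine Finset.sum_congr rfl fun j _ => ?_
        rw [(hrsq j).tsum_eq]
        have hP : (0 : ℝ) ≤ ∏ k, pseudoHyp (lam j) (μ k) :=
          Finset.prod_nonneg fun k _ => norm_nonneg _
        have hD : (0 : ℝ) < 1 - ‖lam j‖ ^ 2 := by
          have := hlam j
          have h0 := norm_nonneg (lam j)
          nlinarith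
        rw [Real.sqrt_mul (by positivity), Real.sqrt_div (sq_nonneg _),
          Real.sqrt_sq hP, Real.sqrt_sq (norm_nonneg _)]
        ring
end
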